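/- arXiv:0901.4266 — 5 statements merged into one kernel-verified Lean document; each statement's English description precedes it below -/
import Mathlib

section
/- Moment bound for the relative error of the empirical eigenvalues: Let m ∈ ℕ and suppose X ∈ 𝒳^{4m}_η for some η ≥ 1. Then there exists a constant C > 0, depending only on m, such that sup_{j≥1} E|λ̂_j/λ_j − 1|^{2m} ≤ C·n^{-m}·η, where λ̂_j := n^{-1} Σ_{i=1}^n ⟨X_i,ψ_j⟩² for an i.i.d. sample X_1,…,X_n of X. -/
open MeasureTheory ProbabilityTheory Filter
open scoped ENNReal NNReal RealInnerProductSpace BigOperators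

noncomputable section

variable {H : Type*} [NormedAddCommGroup H] [InnerProductSpace ℝ H]

/-- The squared weighted norm `‖f‖²_w = ∑_j w_j ⟨f, ψ_j⟩²`, valued in `ℝ≥0∞`. -/
def wNormSq (ψ : ℕ → H) (w : ℕ → ℝ) (f : H) : ℝ≥0∞ :=
  ∑' j, ENNReal.ofReal (w j * ⟪f, ψ j⟫ ^ 2)

/-- The ellipsoid `F^ρ_w = {f : ‖f‖²_w ≤ ρ}`. -/
def ellipsoid (ψ : ℕ → H) (w : ℕ → ℝ) (ρ : ℝ) : Set H :=
  {f | wNormSq ψ w f ≤ ENNReal.ofReal ρ}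

/-- The empirical coefficients `ĝ_j = n⁻¹ ∑ᵢ Yᵢ⟨Xᵢ, ψ_j⟩`. -/
def estG (ψ : ℕ → H) {n : ℕ} (Ys : Fin n → ℝ) (Xs : Fin n → H) (j : ℕ) : ℝ :=
  (n : ℝ)⁻¹ * ∑ i, Ys i * ⟪Xs i, ψ j⟫

/-- The empirical eigenvalues `λ̂_j = n⁻¹ ∑ᵢ ⟨Xᵢ, ψ_j⟩²`. -/
def estLam (ψ : ℕ → H) {n : ℕ} (Xs : Fin n → H) (j : ℕ) : ℝ :=
  (n : ℝ)⁻¹ * ∑ i, ⟪Xs i, ψ j⟫ ^ 2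

/-- The thresholded orthogonal series estimator
`β̂ = ∑_{j=1}^m (ĝ_j/λ̂_j)·1{λ̂_j ≥ α}·ψ_j` (indices shifted to start at `0`). -/
def estBeta (ψ : ℕ → H) {n : ℕ} (m : ℕ) (α : ℝ) (Ys : Fin n → ℝ) (Xs : Fin n → H) : H :=
  ∑ j ∈ Finset.range m,
    (if α ≤ estLam ψ Xs j then estG ψ Ys Xs j / estLam ψ Xs j else 0) • ψ j

/-- The truncated target `β̃_m = ∑_{j=1}^m ⟨β,ψ_j⟩·1{λ̂_j ≥ α}·ψ_j`. -/
def truncBeta (ψ : ℕ → H) (β : H) {n : ℕ} (m : ℕ) (α : ℝ) (Xs : Fin n → H) : H :=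
  ∑ j ∈ Finset.range m, (if α ≤ estLam ψ Xs j then ⟪β, ψ j⟫ else 0) • ψ j

/-- Sobolev weights `w^p` for the periodic Sobolev ellipsoid: index `j : ℕ` corresponds to
the paper's index `j+1`, so `w^p_1 = 1`, `w^p_{2k} = w^p_{2k+1} = k^{2p}`. -/
def sobW (p : ℝ) (j : ℕ) : ℝ := if j = 0 then 1 else (((j + 1) / 2 : ℕ) : ℝ) ^ (2 * p)

/-- Polynomially decaying weights: `υ_1 = 1`, `υ_j = j^{-2a}` for `j ≥ 2`
(index `j : ℕ` corresponds to the paper's index `j+1`). -/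
def polyW (a : ℝ) (j : ℕ) : ℝ := if j = 0 then 1 else ((j + 1 : ℕ) : ℝ) ^ (-(2 * a))

/-- Exponentially decaying weights: `υ_1 = 1`, `υ_j = exp(-j^{2a})` for `j ≥ 2`
(index `j : ℕ` corresponds to the paper's index `j+1`). -/
def expW (a : ℝ) (j : ℕ) : ℝ :=
  if j = 0 then 1 else Real.exp (-(((j + 1 : ℕ) : ℝ) ^ (2 * a)))

/-- The link condition `(λ_j) ∈ S^d_υ`. -/
def linkCond (Λ υ : ℕ → ℝ) (d : ℝ) : Prop :=
  ∀ j, 1 / d ≤ Λ j / υ j ∧ Λ j / υ j ≤ d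

end

-- product-integral over independent family
lemma aux_integral_prod {Ω : Type*} [MeasurableSpace Ω] {P : Measure Ω} [IsProbabilityMeasure P]
    {n : ℕ} {W : Fin n → Ω → ℝ}
    (hindep : iIndepFun W P)
    (hmeas : ∀ i, Measurable (W i)) (hint : ∀ i, Integrable (W i) P) (s : Finset (Fin n)) :
    Integrable (∏ i ∈ s, W i) P ∧ ∫ ω, (∏ i ∈ s, W i) ω ∂P = ∏ i ∈ s, ∫ ω, W i ω ∂P := by
  classical
  induction s using Finset.induction_on with
  | empty => exact ⟨by simp only [Finset.prod_empty]; exact integrable_const (1:ℝ), by simp⟩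
  | insert a s hi ih =>
    obtain ⟨ih1, ih2⟩ := ih
    have hIF : IndepFun (∏ j ∈ s, W j) (W a) P :=
      hindep.indepFun_finset_prod_of_notMem hmeas hi
    have hintm : Integrable ((∏ j ∈ s, W j) * W a) P := hIF.integrable_mul ih1 (hint a)
    have heq : ∫ ω, ((∏ j ∈ s, W j) * W a) ω ∂P
        = (∫ ω, (∏ j ∈ s, W j) ω ∂P) * ∫ ω, W a ω ∂P :=
      hIF.integral_mul_eq_mul_integral ih1.aestronglyMeasurable (hint a).aestronglyMeasurable
    constructor
    · rw [Finset.prod_insert hi]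
      simpa [mul_comm] using hintm
    · rw [Finset.prod_insert hi, Finset.prod_insert hi, ← ih2]
      have : ∫ ω, (W a * ∏ x ∈ s, W x) ω ∂P = ∫ ω, ((∏ j ∈ s, W j) * W a) ω ∂P := by
        congr 1; ext ω; simp [mul_comm]
      rw [this, heq, mul_comm]

lemma aux_lyapunov {Ω : Type*} [MeasurableSpace Ω] {P : Measure Ω} [IsProbabilityMeasure P]
    {Z : Ω → ℝ} (hZ : Measurable Z) {q : ℕ} (hq : q ≠ 0) {c : ℕ} (hc : c ≤ q)
    {B : ℝ≥0∞} (hZq : ∫⁻ ω, (‖Z ω‖₊ : ℝ≥0∞) ^ q ∂P ≤ B) :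
    ∫⁻ ω, (‖Z ω‖₊ : ℝ≥0∞) ^ c ∂P ≤ (B ^ (1/(q:ℝ))) ^ c := by
  rcases Nat.eq_zero_or_pos c with hc0 | hc0
  · simp [hc0]
  have hcne : (c : ℝ≥0∞) ≠ 0 := by exact_mod_cast hc0.ne'
  have hqne : (q : ℝ≥0∞) ≠ 0 := by exact_mod_cast hq
  have hcq : (c : ℝ≥0∞) ≤ (q : ℝ≥0∞) := by exact_mod_cast hc
  have h1 : eLpNorm Z (c : ℝ≥0∞) P ≤ eLpNorm Z (q : ℝ≥0∞) P :=
    eLpNorm_le_eLpNorm_of_exponent_le hcq hZ.aestronglyMeasurable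
  have hform : ∀ k : ℕ, k ≠ 0 → eLpNorm Z (k : ℝ≥0∞) P
      = (∫⁻ ω, (‖Z ω‖₊ : ℝ≥0∞) ^ k ∂P) ^ (1/(k:ℝ)) := by
    intro k hk
    rw [eLpNorm_eq_lintegral_rpow_enorm_toReal (by exact_mod_cast hk) (by simp)]
    simp only [ENNReal.toReal_natCast]
    congr 1
    refine lintegral_congr fun ω => ?_
    rw [← ENNReal.rpow_natCast]; rfl
  have h2 : ∫⁻ ω, (‖Z ω‖₊ : ℝ≥0∞) ^ c ∂P = (eLpNorm Z (c : ℝ≥0∞) P) ^ c := by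
    rw [hform c hc0.ne', ← ENNReal.rpow_natCast _ c, ← ENNReal.rpow_mul,
      one_div_mul_cancel (by exact_mod_cast hc0.ne'), ENNReal.rpow_one]
  rw [h2]
  calc (eLpNorm Z (c : ℝ≥0∞) P) ^ c ≤ (eLpNorm Z (q : ℝ≥0∞) P) ^ c :=
        pow_le_pow_left' h1 c
    _ ≤ (B ^ (1/(q:ℝ))) ^ c := by
        refine pow_le_pow_left' ?_ c
        rw [hform q hq]
        exact ENNReal.rpow_le_rpow hZq (by positivity)

lemma aux_fiber {q n m : ℕ} (hqm : q = 2*m) (f : Fin q → Fin n)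
    (h : ∀ i ∈ Finset.univ.image f, 2 ≤ (Finset.univ.filter fun t => f t = i).card) :
    (Finset.univ.image f).card ≤ m := by
  classical
  have hcard : (Finset.univ : Finset (Fin q)).card
      = ∑ i ∈ Finset.univ.image f, (Finset.univ.filter fun t => f t = i).card :=
    Finset.card_eq_sum_card_fiberwise (fun x _ => Finset.mem_image_of_mem f (Finset.mem_univ x))
  have h2 : (Finset.univ.image f).card * 2 ≤ q := by
    calc (Finset.univ.image f).card * 2 = ∑ _i ∈ Finset.univ.image f, 2 := by
          rw [Finset.sum_const, smul_eq_mul, mul_comm]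
      _ ≤ ∑ i ∈ Finset.univ.image f, (Finset.univ.filter fun t => f t = i).card :=
          Finset.sum_le_sum h
      _ = q := by rw [← hcard]; simp
  omega

lemma aux_count {q n m : ℕ} (hn : 0 < n) :
    (Finset.univ.filter fun f : Fin q → Fin n => (Finset.univ.image f).card ≤ m).card
      ≤ m ^ q * n ^ m := by
  classical
  set Φ : ((Fin q → Fin m) × (Fin m → Fin n)) → (Fin q → Fin n) :=
    fun p => p.2 ∘ p.1 with hΦ
  have hsub : (Finset.univ.filter fun f : Fin q → Fin n => (Finset.univ.image f).card ≤ m)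
      ⊆ Finset.univ.image Φ := by
    intro f hf
    rw [Finset.mem_filter] at hf
    obtain ⟨-, hm⟩ := hf
    set s := Finset.univ.image f with hs
    have hmem : ∀ t, f t ∈ s := fun t => Finset.mem_image_of_mem f (Finset.mem_univ t)
    set e := s.orderIsoOfFin (rfl : s.card = s.card) with he
    refine Finset.mem_image.mpr ⟨⟨fun t => ⟨(e.symm ⟨f t, hmem t⟩ : Fin s.card),
      lt_of_lt_of_le (Fin.is_lt _) hm⟩,
      fun a => if ha : (a : ℕ) < s.card then (e ⟨a, ha⟩ : Fin n) else ⟨0, hn⟩⟩,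
      Finset.mem_univ _, ?_⟩
    funext t
    simp only [hΦ, Function.comp_apply]
    rw [dif_pos (Fin.is_lt (e.symm ⟨f t, hmem t⟩))]
    have : (⟨((e.symm ⟨f t, hmem t⟩ : Fin s.card) : ℕ), Fin.is_lt _⟩ : Fin s.card)
        = e.symm ⟨f t, hmem t⟩ := by ext; rfl
    rw [this]
    simp
  calc _ ≤ (Finset.univ.image Φ).card := Finset.card_le_card hsub
    _ ≤ (Finset.univ : Finset ((Fin q → Fin m) × (Fin m → Fin n))).card :=
        Finset.card_image_le
    _ = m ^ q * n ^ m := by simp [Finset.card_univ]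

/-- Moment bound for the relative error of the empirical eigenvalues.
For every `m` there is a constant `C > 0` depending only on `m` such that for every
second-order stationary `X ∈ 𝒳^{4m}_η` and i.i.d. sample `X_1, …, X_n`,
`sup_j E|λ̂_j/λ_j - 1|^{2m} ≤ C n^{-m} η`. -/
theorem stmt12 (m : ℕ) :
    ∃ C : ℝ, 0 < C ∧
      ∀ (H : Type*) [NormedAddCommGroup H] [InnerProductSpace ℝ H] [CompleteSpace H]
        [MeasurableSpace H] [BorelSpace H]
        (Ω : Type*) [MeasurableSpace Ω] (P : Measure Ω) [IsProbabilityMeasure P]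
        (ψ : ℕ → H) (_hψ : Orthonormal ℝ ψ)
        (n : ℕ) (_hn : 0 < n) (X : Fin n → Ω → H)
        (_hXmeas : ∀ i, Measurable (X i))
        -- i.i.d. sample
        (_hindep : iIndepFun X P)
        (_hident : ∀ i i', IdentDistrib (X i) (X i') P P)
        -- centered, with finite second moment
        (_hXcent : ∀ i, ∫ ω, X i ω ∂P = 0)
        (_hX2 : ∀ i, MemLp (X i) 2 P)
        -- second-order stationarity: uncorrelated coefficients with variances Λ j > 0
        (Λ : ℕ → ℝ) (_hΛpos : ∀ j, 0 < Λ j)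
        (_hstat : ∀ i j k,
          ∫ ω, ⟪X i ω, ψ j⟫ * ⟪X i ω, ψ k⟫ ∂P = if j = k then Λ j else 0)
        -- moment class `X ∈ 𝒳^{4m}_η`
        (η : ℝ) (_hη : 1 ≤ η)
        (_hmom : ∀ (i : Fin n) (j : ℕ),
          ∫⁻ ω, (‖⟪X i ω, ψ j⟫ / Real.sqrt (Λ j)‖₊ : ℝ≥0∞) ^ (4 * m) ∂P ≤
            ENNReal.ofReal η),
        ∀ j : ℕ,
          ∫⁻ ω, (‖estLam ψ (fun i => X i ω) j / Λ j - 1‖₊ : ℝ≥0∞) ^ (2 * m) ∂P ≤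
            ENNReal.ofReal (C * ((n : ℝ) ^ m)⁻¹ * η) := by
  classical
  refine ⟨((m : ℝ) + 1) ^ (2 * m) * 2 ^ (2 * m + 1), by positivity, ?_⟩
  intro H _ _ _ _ _ Ω _ P _ ψ hψ n hn X hXmeas hindep hident hXcent hX2 Λ hΛpos hstat η hη
    hmom j
  set q := 2 * m with hqdef
  have hq0 : q ≠ 0 ∨ m = 0 := by omega
  rcases Nat.eq_zero_or_pos m with hm0 | hmpos
  · -- trivial case m = 0
    subst hm0
    simp only [hqdef, Nat.mul_zero, pow_zero, lintegral_one, measure_univ, mul_one, pow_one]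
    rw [show (1 : ℝ≥0∞) = ENNReal.ofReal 1 from (ENNReal.ofReal_one).symm]
    refine ENNReal.ofReal_le_ofReal ?_
    nlinarith
  have hq0 : q ≠ 0 := by omega
  have hqR : (q : ℝ) ≠ 0 := by exact_mod_cast hq0
  have hΛ := hΛpos j
  have hnR : (n : ℝ) ≠ 0 := Nat.cast_ne_zero.mpr hn.ne'
  set V : Fin n → Ω → ℝ := fun i ω => ⟪X i ω, ψ j⟫ with hV
  set Z : Fin n → Ω → ℝ := fun i ω => V i ω ^ 2 / Λ j - 1 with hZ
  have hVmeas : ∀ i, Measurable (V i) := fun i =>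
    (continuous_id.inner continuous_const).measurable.comp (hXmeas i)
  have hZmeas : ∀ i, Measurable (Z i) :=
    fun i => (((hVmeas i).pow_const 2).div_const _).sub_const 1
  have hZindep : iIndepFun Z P := by
    have h := hindep.comp (fun _ => fun h : H => ⟪h, ψ j⟫ ^ 2 / Λ j - 1)
      (fun _ => ((((continuous_id.inner continuous_const).measurable).pow_const 2).div_const
        _).sub_const 1)
    exact h
  -- the moment bound for Z
  set b : ℝ := 2 ^ (q + 1) * η with hb
  have h2q : (1 : ℝ) ≤ 2 ^ (q + 1) := one_le_pow₀ one_le_two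
  have hb1 : (1 : ℝ) ≤ b := by nlinarith
  have hb0 : (0 : ℝ) ≤ b := by linarith
  set B : ℝ≥0∞ := ENNReal.ofReal b with hB
  have hBtop : B ≠ ⊤ := ENNReal.ofReal_ne_top
  have hZq : ∀ i, ∫⁻ ω, (‖Z i ω‖₊ : ℝ≥0∞) ^ q ∂P ≤ B := by
    intro i
    have hpt : ∀ ω, (‖Z i ω‖₊ : ℝ≥0∞) ^ q
        ≤ 2 ^ q * ((‖V i ω / Real.sqrt (Λ j)‖₊ : ℝ≥0∞) ^ (4 * m) + 1) := by
      intro ω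
      set x : ℝ≥0∞ := (‖V i ω / Real.sqrt (Λ j)‖₊ : ℝ≥0∞) with hx
      have hZx : Z i ω = (V i ω / Real.sqrt (Λ j)) ^ 2 - 1 := by
        rw [hZ]
        simp only [div_pow, Real.sq_sqrt hΛ.le]
      have h1 : (‖Z i ω‖₊ : ℝ≥0∞) ≤ x ^ 2 + 1 := by
        rw [hZx]
        calc (‖(V i ω / Real.sqrt (Λ j)) ^ 2 - 1‖₊ : ℝ≥0∞)
            ≤ ((‖(V i ω / Real.sqrt (Λ j)) ^ 2‖₊ + ‖(1:ℝ)‖₊ : ℝ≥0) : ℝ≥0∞) :=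
              ENNReal.coe_le_coe.mpr (nnnorm_sub_le _ _)
          _ = x ^ 2 + 1 := by
              simp only [nnnorm_pow, ENNReal.coe_add, ENNReal.coe_pow, nnnorm_one,
                ENNReal.coe_one, ← hx]
      have h2 : x ^ 2 + 1 ≤ 2 * max (x ^ 2) 1 :=
        (add_le_add (le_max_left _ _) (le_max_right _ _)).trans_eq (two_mul _).symm
      have h3 : (max (x ^ 2) 1) ^ q ≤ x ^ (4 * m) + 1 := by
        rcases le_total (x ^ 2) 1 with hle | hle
        · rw [max_eq_right hle]
          simp
        · rw [max_eq_left hle, ← pow_mul, show 2 * q = 4 * m by omega]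
          exact le_add_right le_rfl
      calc (‖Z i ω‖₊ : ℝ≥0∞) ^ q ≤ (2 * max (x ^ 2) 1) ^ q :=
            pow_le_pow_left' (h1.trans h2) q
        _ = 2 ^ q * (max (x ^ 2) 1) ^ q := mul_pow _ _ _
        _ ≤ 2 ^ q * (x ^ (4 * m) + 1) := mul_le_mul_right h3 _
    have hxmeas : Measurable fun ω => (‖V i ω / Real.sqrt (Λ j)‖₊ : ℝ≥0∞) ^ (4 * m) :=
      (((hVmeas i).div_const _).enorm).pow_const _
    calc ∫⁻ ω, (‖Z i ω‖₊ : ℝ≥0∞) ^ q ∂P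
        ≤ ∫⁻ ω, 2 ^ q * ((‖V i ω / Real.sqrt (Λ j)‖₊ : ℝ≥0∞) ^ (4 * m) + 1) ∂P :=
          lintegral_mono hpt
      _ = 2 ^ q * ((∫⁻ ω, (‖V i ω / Real.sqrt (Λ j)‖₊ : ℝ≥0∞) ^ (4 * m) ∂P) + 1) := by
          rw [lintegral_const_mul _ (hxmeas.add_const 1),
            lintegral_add_right _ measurable_const, lintegral_const, measure_univ, mul_one]
      _ ≤ 2 ^ q * (ENNReal.ofReal η + 1) := by
          exact mul_le_mul_right (add_le_add_left (hmom i j) 1) _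
      _ ≤ B := by
          have hη1 : (1 : ℝ≥0∞) ≤ ENNReal.ofReal η := by
            rw [← ENNReal.ofReal_one]; exact ENNReal.ofReal_le_ofReal hη
          calc (2:ℝ≥0∞) ^ q * (ENNReal.ofReal η + 1)
              ≤ 2 ^ q * (ENNReal.ofReal η + ENNReal.ofReal η) :=
                mul_le_mul_right (add_le_add_right hη1 _) _
            _ = 2 ^ (q + 1) * ENNReal.ofReal η := by
                rw [← two_mul, pow_succ]; ring
            _ = B := by
                rw [hB, hb, ENNReal.ofReal_mul (by positivity),
                  ENNReal.ofReal_pow (by norm_num : (0:ℝ) ≤ 2), ENNReal.ofReal_ofNat]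
  -- Lyapunov bounds and integrability of powers
  have hZc_lint : ∀ i (c : ℕ), c ≤ q →
      ∫⁻ ω, (‖Z i ω‖₊ : ℝ≥0∞) ^ c ∂P ≤ (B ^ (1/(q:ℝ))) ^ c :=
    fun i c hc => aux_lyapunov (hZmeas i) hq0 hc (hZq i)
  have hBq_top : (B ^ (1/(q:ℝ))) ≠ ⊤ := ENNReal.rpow_ne_top_of_nonneg (by positivity) hBtop
  have hZcint : ∀ i (c : ℕ), c ≤ q → Integrable (fun ω => Z i ω ^ c) P := by
    intro i c hc
    refine ⟨((hZmeas i).pow_const c).aestronglyMeasurable, ?_⟩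
    rw [hasFiniteIntegral_def]
    have : ∫⁻ ω, (‖Z i ω ^ c‖₊ : ℝ≥0∞) ∂P = ∫⁻ ω, (‖Z i ω‖₊ : ℝ≥0∞) ^ c ∂P := by
      refine lintegral_congr fun ω => ?_
      rw [nnnorm_pow, ENNReal.coe_pow]
    rw [show (∫⁻ ω, ‖Z i ω ^ c‖ₑ ∂P) = _ from this]
    exact lt_of_le_of_lt (hZc_lint i c hc) (ENNReal.pow_ne_top hBq_top).lt_top
  have hZint : ∀ i, Integrable (Z i) P := by
    intro i
    have h := hZcint i 1 (by omega)
    simp only [pow_one] at h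
    exact h
  -- mean zero
  have hV2int : ∀ i, Integrable (fun ω => V i ω ^ 2) P := by
    intro i
    have h1 : Integrable (fun ω => (Z i ω + 1) * Λ j) P :=
      ((hZint i).add (integrable_const 1)).mul_const _
    have heq : (fun ω => (Z i ω + 1) * Λ j) = fun ω => V i ω ^ 2 := by
      funext ω
      rw [hZ]
      field_simp; ring
    rwa [heq] at h1
  have hZmean : ∀ i, ∫ ω, Z i ω ∂P = 0 := by
    intro i
    have hV2 : ∫ ω, V i ω ^ 2 ∂P = Λ j := by
      have h := hstat i j j
      rw [if_pos rfl] at h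
      rw [← h]
      refine integral_congr_ae (ae_of_all _ fun ω => ?_)
      simp [hV, sq]
    have heq : (fun ω => Z i ω) = fun ω => V i ω ^ 2 * (Λ j)⁻¹ - 1 := by
      funext ω; simp only [hZ, div_eq_mul_inv]
    calc ∫ ω, Z i ω ∂P = ∫ ω, (V i ω ^ 2 * (Λ j)⁻¹ - 1) ∂P := by rw [heq]
      _ = (∫ ω, V i ω ^ 2 ∂P) * (Λ j)⁻¹ - 1 := by
          rw [integral_sub ((hV2int i).mul_const _) (integrable_const 1),
            integral_mul_const, integral_const]
          simp
      _ = 0 := by rw [hV2]; field_simp; norm_num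
  -- the expansion of the q-th power of the sum
  have hcle : ∀ (f : Fin q → Fin n) (i : Fin n),
      (Finset.univ.filter fun t => f t = i).card ≤ q := by
    intro f i
    calc (Finset.univ.filter fun t => f t = i).card
        ≤ (Finset.univ : Finset (Fin q)).card := Finset.card_filter_le _ _
      _ = q := by simp
  have hSpt : ∀ ω, (∑ i, Z i ω) ^ q = ∑ f : Fin q → Fin n,
      ∏ i ∈ Finset.univ.image f,
        Z i ω ^ ((Finset.univ.filter fun t => f t = i).card) := by
    intro ω
    calc (∑ i, Z i ω) ^ q = ∏ _t : Fin q, (∑ i, Z i ω) := by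
          rw [Finset.prod_const, Finset.card_univ, Fintype.card_fin]
      _ = ∑ f ∈ Fintype.piFinset (fun _ : Fin q => (Finset.univ : Finset (Fin n))),
            ∏ t, Z (f t) ω := Finset.prod_univ_sum _ _
      _ = ∑ f : Fin q → Fin n, ∏ t, Z (f t) ω := by rw [Fintype.piFinset_univ]
      _ = _ := Finset.sum_congr rfl fun f _ => Finset.prod_comp (fun i => Z i ω) f
  have hterm : ∀ f : Fin q → Fin n,
      Integrable (fun ω => ∏ i ∈ Finset.univ.image f,
        Z i ω ^ ((Finset.univ.filter fun t => f t = i).card)) P ∧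
      ∫ ω, ∏ i ∈ Finset.univ.image f,
          Z i ω ^ ((Finset.univ.filter fun t => f t = i).card) ∂P
        = ∏ i ∈ Finset.univ.image f,
            ∫ ω, Z i ω ^ ((Finset.univ.filter fun t => f t = i).card) ∂P := by
    intro f
    have hWindep : iIndepFun
        (fun i => fun ω => Z i ω ^ ((Finset.univ.filter fun t => f t = i).card)) P := by
      have h := hZindep.comp
        (fun i => fun x : ℝ => x ^ ((Finset.univ.filter fun t => f t = i).card))
        (fun i => measurable_id.pow_const _)
      exact h
    have h := aux_integral_prod hWindep (fun i => (hZmeas i).pow_const _)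
      (fun i => hZcint i _ (hcle f i)) (Finset.univ.image f)
    obtain ⟨h1, h2⟩ := h
    have heq : (∏ i ∈ Finset.univ.image f,
        fun ω => Z i ω ^ ((Finset.univ.filter fun t => f t = i).card))
        = fun ω => ∏ i ∈ Finset.univ.image f,
            Z i ω ^ ((Finset.univ.filter fun t => f t = i).card) := by
      funext ω; rw [Finset.prod_apply]
    rw [heq] at h1 h2
    exact ⟨h1, h2⟩
  have hSint : Integrable (fun ω => (∑ i, Z i ω) ^ q) P := by
    have heq : (fun ω => (∑ i, Z i ω) ^ q) = fun ω => ∑ f : Fin q → Fin n,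
        ∏ i ∈ Finset.univ.image f,
          Z i ω ^ ((Finset.univ.filter fun t => f t = i).card) := funext hSpt
    rw [heq]
    exact integrable_finset_sum _ fun f _ => (hterm f).1
  have hSval : ∫ ω, (∑ i, Z i ω) ^ q ∂P = ∑ f : Fin q → Fin n,
      ∏ i ∈ Finset.univ.image f,
        ∫ ω, Z i ω ^ ((Finset.univ.filter fun t => f t = i).card) ∂P := by
    calc ∫ ω, (∑ i, Z i ω) ^ q ∂P
        = ∫ ω, ∑ f : Fin q → Fin n, ∏ i ∈ Finset.univ.image f,
            Z i ω ^ ((Finset.univ.filter fun t => f t = i).card) ∂P := by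
          refine integral_congr_ae (ae_of_all _ fun ω => hSpt ω)
      _ = ∑ f : Fin q → Fin n, ∫ ω, ∏ i ∈ Finset.univ.image f,
            Z i ω ^ ((Finset.univ.filter fun t => f t = i).card) ∂P :=
          integral_finset_sum _ fun f _ => (hterm f).1
      _ = _ := Finset.sum_congr rfl fun f _ => (hterm f).2
  -- bound each factor
  set β : ℝ := (B ^ (1/(q:ℝ))).toReal with hβ
  have hβ0 : 0 ≤ β := ENNReal.toReal_nonneg
  have hfac : ∀ (i : Fin n) (c : ℕ), c ≤ q → |∫ ω, Z i ω ^ c ∂P| ≤ β ^ c := by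
    intro i c hc
    calc |∫ ω, Z i ω ^ c ∂P| = ‖∫ ω, Z i ω ^ c ∂P‖ := (Real.norm_eq_abs _).symm
      _ ≤ (∫⁻ ω, ENNReal.ofReal ‖Z i ω ^ c‖ ∂P).toReal := norm_integral_le_lintegral_norm _
      _ = (∫⁻ ω, (‖Z i ω‖₊ : ℝ≥0∞) ^ c ∂P).toReal := by
          congr 1
          refine lintegral_congr fun ω => ?_
          rw [ofReal_norm, enorm_eq_nnnorm, nnnorm_pow, ENNReal.coe_pow]
      _ ≤ ((B ^ (1/(q:ℝ))) ^ c).toReal :=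
          ENNReal.toReal_mono (ENNReal.pow_ne_top hBq_top) (hZc_lint i c hc)
      _ = β ^ c := ENNReal.toReal_pow _ _
  have hβq : β ^ q = b := by
    rw [hβ, ← ENNReal.toReal_pow, ← ENNReal.rpow_natCast (B ^ (1/(q:ℝ))) q,
      ← ENNReal.rpow_mul, one_div_mul_cancel hqR, ENNReal.rpow_one, hB,
      ENNReal.toReal_ofReal hb0]
  have hfibsum : ∀ f : Fin q → Fin n,
      ∑ i ∈ Finset.univ.image f, (Finset.univ.filter fun t => f t = i).card = q := by
    intro f
    rw [← Finset.card_eq_sum_card_fiberwise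
      (fun x _ => Finset.mem_image_of_mem f (Finset.mem_univ x))]
    simp
  have htermbound : ∀ f : Fin q → Fin n,
      |∏ i ∈ Finset.univ.image f,
        ∫ ω, Z i ω ^ ((Finset.univ.filter fun t => f t = i).card) ∂P| ≤ b := by
    intro f
    calc |∏ i ∈ Finset.univ.image f,
          ∫ ω, Z i ω ^ ((Finset.univ.filter fun t => f t = i).card) ∂P|
        = ∏ i ∈ Finset.univ.image f,
            |∫ ω, Z i ω ^ ((Finset.univ.filter fun t => f t = i).card) ∂P| :=
          Finset.abs_prod _ _
      _ ≤ ∏ i ∈ Finset.univ.image f, β ^ ((Finset.univ.filter fun t => f t = i).card) :=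
          Finset.prod_le_prod (fun i _ => abs_nonneg _) (fun i _ => hfac i _ (hcle f i))
      _ = β ^ q := by rw [Finset.prod_pow_eq_pow_sum, hfibsum f]
      _ = b := hβq
  have hvanish : ∀ f : Fin q → Fin n, ¬ (Finset.univ.image f).card ≤ m →
      ∏ i ∈ Finset.univ.image f,
        ∫ ω, Z i ω ^ ((Finset.univ.filter fun t => f t = i).card) ∂P = 0 := by
    intro f hf
    have h2 : ¬ ∀ i ∈ Finset.univ.image f,
        2 ≤ (Finset.univ.filter fun t => f t = i).card :=
      fun h => hf (aux_fiber hqdef f h)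
    push_neg at h2
    obtain ⟨i₀, hi₀, hlt⟩ := h2
    have hpos : 1 ≤ (Finset.univ.filter fun t => f t = i₀).card := by
      obtain ⟨t, -, ht⟩ := Finset.mem_image.mp hi₀
      refine Finset.card_pos.mpr ⟨t, ?_⟩
      simp [ht]
    have hone : (Finset.univ.filter fun t => f t = i₀).card = 1 := by omega
    refine Finset.prod_eq_zero hi₀ ?_
    rw [hone]
    simpa using hZmean i₀
  -- total bound on the integral of S^q
  have hSbound : ∫ ω, (∑ i, Z i ω) ^ q ∂P ≤ ((m ^ q * n ^ m : ℕ) : ℝ) * b := by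
    rw [hSval]
    rw [← Finset.sum_filter_add_sum_filter_not Finset.univ
      (fun f : Fin q → Fin n => (Finset.univ.image f).card ≤ m)]
    have hzero : ∑ f ∈ Finset.univ.filter
        (fun f : Fin q → Fin n => ¬ (Finset.univ.image f).card ≤ m),
        ∏ i ∈ Finset.univ.image f,
          ∫ ω, Z i ω ^ ((Finset.univ.filter fun t => f t = i).card) ∂P = 0 :=
      Finset.sum_eq_zero fun f hf => hvanish f (Finset.mem_filter.mp hf).2
    rw [hzero, add_zero]
    calc ∑ f ∈ Finset.univ.filter
          (fun f : Fin q → Fin n => (Finset.univ.image f).card ≤ m),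
          ∏ i ∈ Finset.univ.image f,
            ∫ ω, Z i ω ^ ((Finset.univ.filter fun t => f t = i).card) ∂P
        ≤ ∑ _f ∈ Finset.univ.filter
            (fun f : Fin q → Fin n => (Finset.univ.image f).card ≤ m), b :=
          Finset.sum_le_sum fun f _ => (le_abs_self _).trans (htermbound f)
      _ = (Finset.univ.filter
            (fun f : Fin q → Fin n => (Finset.univ.image f).card ≤ m)).card * b := by
          rw [Finset.sum_const, nsmul_eq_mul]
      _ ≤ ((m ^ q * n ^ m : ℕ) : ℝ) * b := by
          refine mul_le_mul_of_nonneg_right ?_ hb0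
          exact_mod_cast aux_count hn
  -- rewrite of the target function
  have hrepr : ∀ ω, estLam ψ (fun i => X i ω) j / Λ j - 1 = (n:ℝ)⁻¹ * ∑ i, Z i ω := by
    intro ω
    have hsum : ∑ i, Z i ω = (∑ i, ⟪X i ω, ψ j⟫ ^ 2) / Λ j - n := by
      simp only [hZ, hV]
      rw [Finset.sum_sub_distrib, Finset.sum_div]
      simp
    simp only [estLam]
    rw [hsum]
    field_simp
  have heven : Even q := ⟨m, by omega⟩
  have hintq : Integrable (fun ω => ((n:ℝ)⁻¹ * ∑ i, Z i ω) ^ q) P := by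
    have heq : (fun ω => ((n:ℝ)⁻¹ * ∑ i, Z i ω) ^ q)
        = fun ω => ((n:ℝ)⁻¹) ^ q * (∑ i, Z i ω) ^ q := funext fun ω => mul_pow _ _ _
    rw [heq]
    exact hSint.const_mul _
  have hnn : 0 ≤ᵐ[P] fun ω => ((n:ℝ)⁻¹ * ∑ i, Z i ω) ^ q :=
    Filter.Eventually.of_forall fun ω => heven.pow_nonneg _
  calc ∫⁻ ω, (‖estLam ψ (fun i => X i ω) j / Λ j - 1‖₊ : ℝ≥0∞) ^ q ∂P
      = ∫⁻ ω, ENNReal.ofReal (((n:ℝ)⁻¹ * ∑ i, Z i ω) ^ q) ∂P := by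
        refine lintegral_congr fun ω => ?_
        rw [hrepr ω, ← enorm_eq_nnnorm, Real.enorm_eq_ofReal_abs, ← ENNReal.ofReal_pow (abs_nonneg _),
          pow_abs, abs_of_nonneg (heven.pow_nonneg _)]
    _ = ENNReal.ofReal (∫ ω, ((n:ℝ)⁻¹ * ∑ i, Z i ω) ^ q ∂P) :=
        (MeasureTheory.ofReal_integral_eq_lintegral_ofReal hintq hnn).symm
    _ ≤ ENNReal.ofReal (((m:ℝ)+1) ^ q * 2 ^ (q+1) * (((n:ℝ) ^ m)⁻¹) * η) := by
        refine ENNReal.ofReal_le_ofReal ?_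
        have hval : ∫ ω, ((n:ℝ)⁻¹ * ∑ i, Z i ω) ^ q ∂P
            = ((n:ℝ)⁻¹) ^ q * ∫ ω, (∑ i, Z i ω) ^ q ∂P := by
          rw [show (fun ω => ((n:ℝ)⁻¹ * ∑ i, Z i ω) ^ q)
              = fun ω => ((n:ℝ)⁻¹) ^ q * (∑ i, Z i ω) ^ q from funext fun ω => mul_pow _ _ _]
          exact integral_const_mul _ _
        rw [hval]
        have hle := mul_le_mul_of_nonneg_left hSbound
          (pow_nonneg (inv_nonneg.mpr (Nat.cast_nonneg n)) q)
        refine hle.trans ?_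
        have key : ((n:ℝ)⁻¹) ^ q * (((m ^ q * n ^ m : ℕ) : ℝ) * b)
            = (m:ℝ) ^ q * 2 ^ (q+1) * (((n:ℝ) ^ m)⁻¹) * η := by
          push_cast
          rw [hb]
          simp only [hqdef]
          field_simp
          ring
          rw [← mul_pow, mul_inv_cancel₀ hnR, one_pow]
        rw [key]
        gcongr
        linarith [Nat.cast_nonneg (α := ℝ) m]
end

section
/- Deviation bounds for the empirical eigenvalues: Let m ∈ ℕ and suppose X ∈ 𝒳^{4m}_η for some η ≥ 1, and let w_1 ≥ 2 and w_2 ≤ 1/2 be real numbers. Then there exists a constant C > 0, depending only on m, such that sup_{j≥1} P(λ̂_j/λ_j ≥ w_1) ≤ C·n^{-m}·η and sup_{j≥1} P(λ̂_j/λ_j < w_2) ≤ C·n^{-m}·η, where λ̂_j := n^{-1} Σ_{i=1}^n ⟨X_i,ψ_j⟩² for an i.i.d. sample X_1,…,X_n of X. -/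
open MeasureTheory ProbabilityTheory Filter
open scoped ENNReal NNReal RealInnerProductSpace BigOperators

private lemma indep_prod_integral {Ω : Type*} {mΩ : MeasurableSpace Ω} {P : Measure Ω}
    [IsProbabilityMeasure P] {ι : Type*} {f : ι → Ω → ℝ}
    (hindep : iIndepFun f P)
    (hmeas : ∀ i, Measurable (f i)) (hint : ∀ i, Integrable (f i) P) (s : Finset ι) :
    Integrable (fun ω => ∏ i ∈ s, f i ω) P ∧
      ∫ ω, ∏ i ∈ s, f i ω ∂P = ∏ i ∈ s, ∫ ω, f i ω ∂P := by
  classical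
  induction s using Finset.induction_on with
  | empty => simp
  | @insert a s ha ih =>
    have hip : IndepFun (∏ i ∈ s, f i) (f a) P :=
      hindep.indepFun_finset_prod_of_notMem hmeas ha
    have hpe : (∏ i ∈ s, f i) = fun ω => ∏ i ∈ s, f i ω := by
      funext ω; simp
    rw [hpe] at hip
    have hint' : Integrable ((fun ω => ∏ i ∈ s, f i ω) * f a) P :=
      hip.integrable_mul ih.1 (hint a)
    have hIeq : ∫ ω, (∏ i ∈ s, f i ω) * f a ω ∂P
        = (∫ ω, ∏ i ∈ s, f i ω ∂P) * ∫ ω, f a ω ∂P :=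
      hip.integral_fun_mul_eq_mul_integral ih.1.aestronglyMeasurable (hint a).aestronglyMeasurable
    constructor
    · have : ((fun ω => ∏ i ∈ s, f i ω) * f a) = fun ω => ∏ i ∈ insert a s, f i ω := by
        funext ω; simp [Finset.prod_insert ha, mul_comm]
      rwa [this] at hint'
    · simp only [Finset.prod_insert ha]
      rw [ih.2] at hIeq
      rw [show (fun ω => f a ω * ∏ i ∈ s, f i ω) = fun ω => (∏ i ∈ s, f i ω) * f a ω from
        funext fun ω => mul_comm _ _, hIeq, mul_comm]

private lemma factor_bound {Ω : Type*} {mΩ : MeasurableSpace Ω} {P : Measure Ω}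
    [IsProbabilityMeasure P] {g : Ω → ℝ} (hg : Measurable g) {N : ℕ} (hN : N ≠ 0)
    {K : ℝ} (hK1 : 1 ≤ K)
    (hA : ∫⁻ ω, (‖g ω‖₊ : ℝ≥0∞) ^ N ∂P ≤ ENNReal.ofReal K)
    {c : ℕ} (hc : c ≤ N) :
    Integrable (fun ω => g ω ^ c) P ∧
      |∫ ω, g ω ^ c ∂P| ≤ (((ENNReal.ofReal K) ^ ((1:ℝ)/N)).toReal) ^ c := by
  have hK0 : (0:ℝ) ≤ K := le_trans zero_le_one hK1
  set y : ℝ≥0∞ := (ENNReal.ofReal K) ^ ((1:ℝ)/N) with hy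
  have hy_top : y ≠ ∞ :=
    ENNReal.rpow_ne_top_of_nonneg (by positivity) ENNReal.ofReal_ne_top
  rcases Nat.eq_zero_or_pos c with hc0 | hc0
  · subst hc0
    simp
  -- c ≥ 1
  have hcne : (c:ℝ) ≠ 0 := Nat.cast_ne_zero.mpr hc0.ne'
  have hNne : (N:ℝ) ≠ 0 := Nat.cast_ne_zero.mpr hN
  -- rewrite nat powers as rpow
  have hLN : ∫⁻ ω, (‖g ω‖₊ : ℝ≥0∞) ^ (N:ℝ) ∂P ≤ ENNReal.ofReal K := by
    refine le_trans (le_of_eq ?_) hA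
    refine lintegral_congr fun ω => ?_
    rw [← ENNReal.rpow_natCast]
  -- L_c ≤ y ^ c
  have hsn : eLpNorm g (c : ℝ≥0∞) P ≤ eLpNorm g (N : ℝ≥0∞) P :=
    eLpNorm_le_eLpNorm_of_exponent_le (by exact_mod_cast hc) hg.aestronglyMeasurable
  rw [eLpNorm_eq_lintegral_rpow_enorm_toReal (by exact_mod_cast hc0.ne') (by simp),
      eLpNorm_eq_lintegral_rpow_enorm_toReal (by exact_mod_cast (Nat.pos_of_ne_zero hN).ne') (by simp)]
      at hsn
  simp only [ENNReal.toReal_natCast] at hsn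
  have hsn2 : (∫⁻ ω, (‖g ω‖₊ : ℝ≥0∞) ^ (c:ℝ) ∂P) ^ ((1:ℝ)/c) ≤ y :=
    le_trans hsn (ENNReal.rpow_le_rpow hLN (by positivity))
  have hLc : ∫⁻ ω, (‖g ω‖₊ : ℝ≥0∞) ^ (c:ℝ) ∂P ≤ y ^ (c:ℝ) := by
    have := ENNReal.rpow_le_rpow hsn2 (show (0:ℝ) ≤ c by positivity)
    rwa [← ENNReal.rpow_mul, one_div, inv_mul_cancel₀ hcne, ENNReal.rpow_one] at this
  have hLc' : ∫⁻ ω, (‖g ω‖₊ : ℝ≥0∞) ^ c ∂P ≤ y ^ c := by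
    calc ∫⁻ ω, (‖g ω‖₊ : ℝ≥0∞) ^ c ∂P = ∫⁻ ω, (‖g ω‖₊ : ℝ≥0∞) ^ (c:ℝ) ∂P := by
          refine lintegral_congr fun ω => ?_; rw [← ENNReal.rpow_natCast]
      _ ≤ y ^ (c:ℝ) := hLc
      _ = y ^ c := by rw [← ENNReal.rpow_natCast]
  have hint : Integrable (fun ω => g ω ^ c) P := by
    refine ⟨(hg.pow_const c).aestronglyMeasurable, ?_⟩
    show (∫⁻ ω, (‖g ω ^ c‖₊ : ℝ≥0∞) ∂P) < ∞
    calc ∫⁻ ω, (‖g ω ^ c‖₊ : ℝ≥0∞) ∂P = ∫⁻ ω, (‖g ω‖₊ : ℝ≥0∞) ^ c ∂P := by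
          refine lintegral_congr fun ω => ?_
          rw [nnnorm_pow, ENNReal.coe_pow]
      _ ≤ y ^ c := hLc'
      _ < ∞ := ENNReal.pow_lt_top hy_top.lt_top
  refine ⟨hint, ?_⟩
  have habs : |∫ ω, g ω ^ c ∂P| ≤ ∫ ω, |g ω| ^ c ∂P := by
    calc |∫ ω, g ω ^ c ∂P| ≤ ∫ ω, |g ω ^ c| ∂P := by
          simpa [Real.norm_eq_abs] using norm_integral_le_integral_norm (fun ω => g ω ^ c)
      _ = ∫ ω, |g ω| ^ c ∂P := by simp [abs_pow]
  refine le_trans habs ?_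
  have hof : ENNReal.ofReal (∫ ω, |g ω| ^ c ∂P) ≤ y ^ c := by
    rw [MeasureTheory.ofReal_integral_eq_lintegral_ofReal
        (by simpa [abs_pow] using hint.abs) (Filter.Eventually.of_forall fun ω => by positivity)]
    calc ∫⁻ ω, ENNReal.ofReal (|g ω| ^ c) ∂P = ∫⁻ ω, (‖g ω‖₊ : ℝ≥0∞) ^ c ∂P := by
          refine lintegral_congr fun ω => ?_
          rw [← enorm_eq_nnnorm, Real.enorm_eq_ofReal_abs, ← ENNReal.ofReal_pow (abs_nonneg _)]
      _ ≤ y ^ c := hLc'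
  have := ENNReal.toReal_mono (by simp [hy_top, ENNReal.pow_ne_top]) hof
  rw [ENNReal.toReal_ofReal (by positivity)] at this
  calc ∫ ω, |g ω| ^ c ∂P ≤ (y ^ c).toReal := this
    _ = y.toReal ^ c := by rw [ENNReal.toReal_pow]

private lemma moment_sum_bound {Ω : Type*} {mΩ : MeasurableSpace Ω} {P : Measure Ω}
    [IsProbabilityMeasure P] {n : ℕ} (hn : 0 < n) {Y : Fin n → Ω → ℝ}
    (hmeas : ∀ i, Measurable (Y i))
    (hindep : iIndepFun Y P)
    (hcent : ∀ i, ∫ ω, Y i ω ∂P = 0)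
    {q : ℕ} (hq : q ≠ 0) {K : ℝ} (hK1 : 1 ≤ K)
    (hA : ∀ i, ∫⁻ ω, (‖Y i ω‖₊ : ℝ≥0∞) ^ (2*q) ∂P ≤ ENNReal.ofReal K) :
    Integrable (fun ω => (∑ i, Y i ω) ^ (2*q)) P ∧
      ∫ ω, (∑ i, Y i ω) ^ (2*q) ∂P ≤ (((q+1) * (q+1)^(2*q) * n^q : ℕ) : ℝ) * K := by
  classical
  set N := 2*q with hNdef
  have hN : N ≠ 0 := by omega
  have hK0 : (0:ℝ) ≤ K := le_trans zero_le_one hK1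
  set yR : ℝ := ((ENNReal.ofReal K) ^ ((1:ℝ)/N)).toReal with hyR
  have hyR0 : 0 ≤ yR := ENNReal.toReal_nonneg
  have hyRN : yR ^ N = K := by
    rw [hyR, ← ENNReal.toReal_pow]
    have h2 : ((ENNReal.ofReal K) ^ ((1:ℝ)/N)) ^ N = ENNReal.ofReal K := by
      rw [← ENNReal.rpow_natCast (((ENNReal.ofReal K) ^ ((1:ℝ)/N))) N, ← ENNReal.rpow_mul,
        one_div, inv_mul_cancel₀ (Nat.cast_ne_zero.mpr hN), ENNReal.rpow_one]
    rw [h2, ENNReal.toReal_ofReal hK0]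
  -- multiplicity function
  set c : (Fin N → Fin n) → Fin n → ℕ :=
    fun p i => (Finset.univ.filter (fun k => p k = i)).card with hcdef
  have hcle : ∀ p i, c p i ≤ N := by
    intro p i
    calc c p i ≤ (Finset.univ : Finset (Fin N)).card := Finset.card_filter_le _ _
      _ = N := by simp
  have hfac := fun (p : Fin N → Fin n) (i : Fin n) =>
    factor_bound (hmeas i) hN hK1 (hA i) (hcle p i)
  -- grouped product functions
  set G : (Fin N → Fin n) → Ω → ℝ := fun p ω => ∏ i, Y i ω ^ c p i with hGdef
  have hGprop := fun (p : Fin N → Fin n) =>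
    indep_prod_integral (f := fun i ω => Y i ω ^ c p i)
      (hindep.comp (fun i (x:ℝ) => x ^ c p i) (fun i => measurable_id.pow_const _))
      (fun i => (hmeas i).pow_const _) (fun i => (hfac p i).1) Finset.univ
  -- expansion
  have hexpand : (fun ω => (∑ i, Y i ω) ^ N)
      = fun ω => ∑ p ∈ Fintype.piFinset (fun _ : Fin N => (Finset.univ : Finset (Fin n))),
          G p ω := by
    funext ω
    rw [Finset.sum_pow' Finset.univ (fun i => Y i ω) N]
    refine Finset.sum_congr rfl fun p _ => ?_
    rw [show (∏ k, Y (p k) ω) = ∏ k ∈ Finset.univ, (fun i => Y i ω) (p k) from rfl,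
      Finset.prod_comp (fun i => Y i ω) p]
    refine Finset.prod_subset (Finset.subset_univ _) fun i _ hi => ?_
    show Y i ω ^ c p i = 1
    have hc0 : c p i = 0 := by
      rw [hcdef]
      simp only [Finset.card_eq_zero, Finset.filter_eq_empty_iff]
      intro k _
      exact fun hk => hi (Finset.mem_image.mpr ⟨k, Finset.mem_univ k, hk⟩)
    rw [hc0, pow_zero]
  -- integrability
  have hint : Integrable (fun ω => (∑ i, Y i ω) ^ N) P := by
    rw [hexpand]
    exact integrable_finset_sum _ fun p _ => (hGprop p).1
  refine ⟨hint, ?_⟩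
  -- compute the integral
  have hIeq : ∫ ω, (∑ i, Y i ω) ^ N ∂P
      = ∑ p ∈ Fintype.piFinset (fun _ : Fin N => (Finset.univ : Finset (Fin n))),
          ∏ i, ∫ ω, Y i ω ^ c p i ∂P := by
    rw [hexpand, integral_finset_sum _ fun p _ => (hGprop p).1]
    exact Finset.sum_congr rfl fun p _ => (hGprop p).2
  -- sum of multiplicities
  have hsumc : ∀ p : Fin N → Fin n, ∑ i, c p i = N := by
    intro p
    rw [hcdef]
    have := Finset.card_eq_sum_card_fiberwise
      (f := p) (s := Finset.univ) (t := Finset.univ) (fun k _ => Finset.mem_univ (p k))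
    simpa using this.symm
  -- valid maps
  set V := (Fintype.piFinset (fun _ : Fin N => (Finset.univ : Finset (Fin n)))).filter
      (fun p => ∀ i, c p i ≠ 1) with hVdef
  have hzero : ∀ p ∈ (Fintype.piFinset (fun _ : Fin N => (Finset.univ : Finset (Fin n)))),
      p ∉ V → ∏ i, ∫ ω, Y i ω ^ c p i ∂P = 0 := by
    intro p hp hpV
    rw [hVdef, Finset.mem_filter] at hpV
    push_neg at hpV
    obtain ⟨i, hi⟩ := hpV hp
    refine Finset.prod_eq_zero (Finset.mem_univ i) ?_
    rw [hi]
    simpa using hcent i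
  have hsplit : ∫ ω, (∑ i, Y i ω) ^ N ∂P = ∑ p ∈ V, ∏ i, ∫ ω, Y i ω ^ c p i ∂P := by
    rw [hIeq]
    exact (Finset.sum_subset (Finset.filter_subset _ _)
      (fun p hp hpV => hzero p hp hpV)).symm
  -- per-term bound
  have hterm : ∀ p : Fin N → Fin n, ∏ i, ∫ ω, Y i ω ^ c p i ∂P ≤ K := by
    intro p
    calc ∏ i, ∫ ω, Y i ω ^ c p i ∂P ≤ |∏ i, ∫ ω, Y i ω ^ c p i ∂P| := le_abs_self _
      _ = ∏ i, |∫ ω, Y i ω ^ c p i ∂P| := Finset.abs_prod _ _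
      _ ≤ ∏ i, yR ^ c p i := Finset.prod_le_prod (fun i _ => abs_nonneg _)
          (fun i _ => (hfac p i).2)
      _ = yR ^ (∑ i, c p i) := Finset.prod_pow_eq_pow_sum _ _ _
      _ = K := by rw [hsumc p, hyRN]
  -- counting
  have hcardV : V.card ≤ (q+1) * (q+1)^N * n^q := by
    -- every valid p has image of card ≤ q
    have himc : ∀ p ∈ V, (Finset.image p Finset.univ).card ≤ q := by
      intro p hp
      rw [hVdef, Finset.mem_filter] at hp
      have h2le : ∀ i ∈ Finset.image p Finset.univ, 2 ≤ c p i := by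
        intro i hi
        obtain ⟨k, _, hk⟩ := Finset.mem_image.mp hi
        have h1 : 1 ≤ c p i := by
          rw [hcdef]
          refine Finset.card_pos.mpr ⟨k, ?_⟩
          simp [hk]
        have := hp.2 i
        omega
      have hsum : ∑ i ∈ Finset.image p Finset.univ, c p i = N := by
        rw [hcdef]
        have := Finset.card_eq_sum_card_fiberwise
          (f := p) (s := Finset.univ) (t := Finset.image p Finset.univ)
          (fun k _ => Finset.mem_image_of_mem p (Finset.mem_univ k))
        simpa using this.symm
      have h2card : 2 * (Finset.image p Finset.univ).card ≤ N := by
        calc 2 * (Finset.image p Finset.univ).card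
            = ∑ _i ∈ Finset.image p Finset.univ, 2 := by
              rw [Finset.sum_const, smul_eq_mul, mul_comm]
          _ ≤ ∑ i ∈ Finset.image p Finset.univ, c p i := Finset.sum_le_sum h2le
          _ = N := hsum
      omega
    -- fiber counting over images
    set T := (Finset.univ : Finset (Finset (Fin n))).filter (fun t => t.card ≤ q) with hTdef
    have hVT : V.card ≤ (q+1)^N * T.card := by
      refine Finset.card_le_mul_card_image_of_maps_to
        (f := fun p => Finset.image p Finset.univ) (t := T) ?_ _ ?_
      · intro p hp
        rw [hTdef, Finset.mem_filter]
        exact ⟨Finset.mem_univ _, himc p hp⟩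
      · intro t ht
        rw [hTdef, Finset.mem_filter] at ht
        calc (V.filter (fun p => Finset.image p Finset.univ = t)).card
            ≤ (Fintype.piFinset (fun _ : Fin N => t)).card := by
              refine Finset.card_le_card ?_
              intro p hp
              rw [Finset.mem_filter] at hp
              rw [Fintype.mem_piFinset]
              intro k
              rw [← hp.2]
              exact Finset.mem_image_of_mem p (Finset.mem_univ k)
          _ = t.card ^ N := Fintype.card_piFinset_const t N
          _ ≤ (q+1)^N := Nat.pow_le_pow_left (by omega) N
    have hT : T.card ≤ (q+1) * n^q := by
      have hsub : T ⊆ (Finset.range (q+1)).biUnion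
          (fun k => Finset.powersetCard k (Finset.univ : Finset (Fin n))) := by
        intro t ht
        rw [hTdef, Finset.mem_filter] at ht
        refine Finset.mem_biUnion.mpr ⟨t.card, Finset.mem_range.mpr (by omega), ?_⟩
        exact Finset.mem_powersetCard.mpr ⟨Finset.subset_univ _, rfl⟩
      calc T.card ≤ ((Finset.range (q+1)).biUnion
            (fun k => Finset.powersetCard k (Finset.univ : Finset (Fin n)))).card :=
            Finset.card_le_card hsub
        _ ≤ ∑ k ∈ Finset.range (q+1),
            (Finset.powersetCard k (Finset.univ : Finset (Fin n))).card :=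
            Finset.card_biUnion_le
        _ ≤ ∑ k ∈ Finset.range (q+1), n^q := by
            refine Finset.sum_le_sum fun k hk => ?_
            rw [Finset.card_powersetCard, Finset.card_univ, Fintype.card_fin]
            calc n.choose k ≤ n ^ k := Nat.choose_le_pow _ _
              _ ≤ n ^ q := Nat.pow_le_pow_right hn (by
                  exact Nat.lt_succ_iff.mp (Finset.mem_range.mp hk))
        _ = (q+1) * n^q := by rw [Finset.sum_const, Finset.card_range, smul_eq_mul]
    calc V.card ≤ (q+1)^N * T.card := hVT
      _ ≤ (q+1)^N * ((q+1) * n^q) := Nat.mul_le_mul_left _ hT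
      _ = (q+1) * (q+1)^N * n^q := by ring
  -- final bound
  rw [hsplit]
  calc ∑ p ∈ V, ∏ i, ∫ ω, Y i ω ^ c p i ∂P ≤ ∑ _p ∈ V, K :=
        Finset.sum_le_sum fun p _ => hterm p
    _ = (V.card : ℝ) * K := by rw [Finset.sum_const, nsmul_eq_mul]
    _ ≤ (((q+1) * (q+1)^N * n^q : ℕ) : ℝ) * K := by
        refine mul_le_mul_of_nonneg_right ?_ hK0
        exact_mod_cast hcardV

/-- Deviation bounds for the empirical eigenvalues.  For every `m` there is a
constant `C > 0` depending only on `m` such that for every second-order stationary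
`X ∈ 𝒳^{4m}_η`, i.i.d. sample `X_1, …, X_n`, and reals `w₁ ≥ 2`, `w₂ ≤ 1/2`,
`sup_j P(λ̂_j/λ_j ≥ w₁) ≤ C n^{-m} η` and `sup_j P(λ̂_j/λ_j < w₂) ≤ C n^{-m} η`. -/
theorem stmt13 (m : ℕ) :
    ∃ C : ℝ, 0 < C ∧
      ∀ (H : Type*) [NormedAddCommGroup H] [InnerProductSpace ℝ H] [CompleteSpace H]
        [MeasurableSpace H] [BorelSpace H]
        (Ω : Type*) [MeasurableSpace Ω] (P : Measure Ω) [IsProbabilityMeasure P]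
        (ψ : ℕ → H) (_hψ : Orthonormal ℝ ψ)
        (n : ℕ) (_hn : 0 < n) (X : Fin n → Ω → H)
        (_hXmeas : ∀ i, Measurable (X i))
        -- i.i.d. sample
        (_hindep : iIndepFun X P)
        (_hident : ∀ i i', IdentDistrib (X i) (X i') P P)
        -- centered, with finite second moment
        (_hXcent : ∀ i, ∫ ω, X i ω ∂P = 0)
        (_hX2 : ∀ i, MemLp (X i) 2 P)
        -- second-order stationarity: uncorrelated coefficients with variances Λ j > 0
        (Λ : ℕ → ℝ) (_hΛpos : ∀ j, 0 < Λ j)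
        (_hstat : ∀ i j k,
          ∫ ω, ⟪X i ω, ψ j⟫ * ⟪X i ω, ψ k⟫ ∂P = if j = k then Λ j else 0)
        -- moment class `X ∈ 𝒳^{4m}_η`
        (η : ℝ) (_hη : 1 ≤ η)
        (_hmom : ∀ (i : Fin n) (j : ℕ),
          ∫⁻ ω, (‖⟪X i ω, ψ j⟫ / Real.sqrt (Λ j)‖₊ : ℝ≥0∞) ^ (4 * m) ∂P ≤
            ENNReal.ofReal η)
        (w₁ w₂ : ℝ) (_hw₁ : 2 ≤ w₁) (_hw₂ : w₂ ≤ 1 / 2),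
        ∀ j : ℕ,
          P {ω | w₁ ≤ estLam ψ (fun i => X i ω) j / Λ j} ≤
              ENNReal.ofReal (C * ((n : ℝ) ^ m)⁻¹ * η) ∧
            P {ω | estLam ψ (fun i => X i ω) j / Λ j < w₂} ≤
              ENNReal.ofReal (C * ((n : ℝ) ^ m)⁻¹ * η) := by
  classical
  refine ⟨2^(4*m+1) * ((m:ℝ)+1)^(2*m+1), by positivity, ?_⟩
  intro H _ _ _ _ _ Ω _ P _ ψ hψ n hn X hXmeas hindep hident hXcent hX2 Λ hΛpos hstat η hη
    hmom w₁ w₂ hw₁ hw₂ j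
  have hη0 : (0:ℝ) ≤ η := le_trans zero_le_one hη
  rcases Nat.eq_zero_or_pos m with hm | hm
  · subst hm
    have hbd : (1:ℝ≥0∞) ≤ ENNReal.ofReal (2^(4*0+1) * ((0:ℝ)+1)^(2*0+1) * ((n:ℝ)^0)⁻¹ * η) := by
      rw [ENNReal.one_le_ofReal]
      norm_num
      linarith
    constructor
    · calc P _ ≤ 1 := prob_le_one
        _ ≤ _ := by
          refine le_trans hbd (le_of_eq ?_)
          norm_num
    · calc P _ ≤ 1 := prob_le_one
        _ ≤ _ := by
          refine le_trans hbd (le_of_eq ?_)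
          norm_num
  -- main case: m ≥ 1
  set C : ℝ := 2^(4*m+1) * ((m:ℝ)+1)^(2*m+1) with hCdef
  have hΛ : 0 < Λ j := hΛpos j
  have hΛ0 : Λ j ≠ 0 := hΛ.ne'
  have hnR : (0:ℝ) < n := Nat.cast_pos.mpr hn
  -- inner product with a fixed vector is measurable
  have hinner_cont : Continuous fun x : H => ⟪x, ψ j⟫ :=
    continuous_inner.comp (continuous_id.prodMk continuous_const)
  set Z : Fin n → Ω → ℝ := fun i ω => ⟪X i ω, ψ j⟫ / Real.sqrt (Λ j) with hZdef
  set Y : Fin n → Ω → ℝ := fun i ω => ⟪X i ω, ψ j⟫^2 / Λ j - 1 with hYdef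
  have hZsq : ∀ i ω, Z i ω ^ 2 = ⟪X i ω, ψ j⟫^2 / Λ j := by
    intro i ω
    rw [hZdef]
    simp only [div_pow]
    rw [Real.sq_sqrt hΛ.le]
  have hYmeas : ∀ i, Measurable (Y i) := fun i =>
    (((hinner_cont.measurable.comp (hXmeas i)).pow_const 2).div_const _).sub measurable_const
  have hYindep : iIndepFun Y P := by
    have h := hindep.comp (fun _ (x : H) => (⟪x, ψ j⟫^2 / Λ j - 1))
      (fun _ => ((hinner_cont.measurable.pow_const 2).div_const _).sub measurable_const)
    exact h
  have hinner_mem : ∀ i, MemLp (fun ω => ⟪X i ω, ψ j⟫) 2 P := by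
    intro i
    have h := MemLp.const_inner (𝕜 := ℝ) (ψ j) (hX2 i)
    simpa [real_inner_comm] using h
  have hsq_int : ∀ i, Integrable (fun ω => ⟪X i ω, ψ j⟫^2) P :=
    fun i => (hinner_mem i).integrable_sq
  have hYcent : ∀ i, ∫ ω, Y i ω ∂P = 0 := by
    intro i
    have hstat' : ∫ ω, ⟪X i ω, ψ j⟫^2 ∂P = Λ j := by
      have h := hstat i j j
      simpa [pow_two] using h
    calc ∫ ω, Y i ω ∂P = ∫ ω, (⟪X i ω, ψ j⟫^2 * (Λ j)⁻¹ - 1) ∂P := by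
          refine integral_congr_ae (Eventually.of_forall fun ω => ?_)
          simp only [hYdef]
          ring
      _ = (∫ ω, ⟪X i ω, ψ j⟫^2 ∂P) * (Λ j)⁻¹ - 1 := by
          rw [integral_sub ((hsq_int i).mul_const _) (integrable_const 1),
            integral_mul_const, integral_const]
          simp
      _ = 0 := by rw [hstat', mul_inv_cancel₀ hΛ0, sub_self]
  -- the moment bound on Y
  set K : ℝ := 2^(2*m) * (2*η) with hKdef
  have h2m1 : (1:ℝ) ≤ 2^(2*m) := by
    calc (1:ℝ) = 1^(2*m) := (one_pow _).symm
      _ ≤ 2^(2*m) := pow_le_pow_left₀ zero_le_one one_le_two _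
  have hK1 : 1 ≤ K := by
    rw [hKdef]
    nlinarith
  have hptR : ∀ i ω, |Y i ω|^(2*m) ≤ 2^(2*m) * (|Z i ω|^(4*m) + 1) := by
    intro i ω
    have hz2 : Y i ω = Z i ω ^2 - 1 := by rw [hZsq i ω]
    have hzz : (0:ℝ) ≤ Z i ω ^ 2 := sq_nonneg _
    have h1 : |Y i ω| ≤ Z i ω^2 + 1 := by
      rw [hz2]; exact abs_le.mpr ⟨by nlinarith, by nlinarith⟩
    have h2 : |Y i ω|^(2*m) ≤ (Z i ω^2+1)^(2*m) := pow_le_pow_left₀ (abs_nonneg _) h1 _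
    have habs : |Z i ω|^(4*m) = (Z i ω^2)^(2*m) := by
      rw [← pow_mul, show 2*(2*m) = 4*m by ring]
      exact Even.pow_abs ⟨2*m, by ring⟩ _
    have h3 : (Z i ω^2+1)^(2*m) ≤ 2^(2*m) * (|Z i ω|^(4*m) + 1) := by
      rw [habs]
      have hp2 : (0:ℝ) ≤ (Z i ω^2)^(2*m) := by positivity
      rcases le_total (Z i ω^2) 1 with h | h
      · have hb : (Z i ω^2+1)^(2*m) ≤ (2:ℝ)^(2*m) :=
          pow_le_pow_left₀ (by positivity) (by linarith) _
        nlinarith [pow_pos (zero_lt_two (α := ℝ)) (2*m)]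
      · have hb : (Z i ω^2+1)^(2*m) ≤ ((2:ℝ)*(Z i ω^2))^(2*m) :=
          pow_le_pow_left₀ (by positivity) (by linarith) _
        rw [mul_pow] at hb
        nlinarith [pow_pos (zero_lt_two (α := ℝ)) (2*m)]
    exact le_trans h2 h3
  have hKbd : ∀ i, ∫⁻ ω, ((‖Y i ω‖₊ : ℝ≥0∞)) ^ (2*m) ∂P ≤ ENNReal.ofReal K := by
    intro i
    have hpt : ∀ ω, ((‖Y i ω‖₊ : ℝ≥0∞)) ^ (2*m)
        ≤ ENNReal.ofReal ((2:ℝ)^(2*m)) * ((‖Z i ω‖₊ : ℝ≥0∞) ^ (4*m) + 1) := by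
      intro ω
      rw [← enorm_eq_nnnorm, Real.enorm_eq_ofReal_abs, ← ENNReal.ofReal_pow (abs_nonneg _),
          ← enorm_eq_nnnorm, Real.enorm_eq_ofReal_abs, ← ENNReal.ofReal_pow (abs_nonneg _),
          ← ENNReal.ofReal_one, ← ENNReal.ofReal_add (by positivity) zero_le_one,
          ← ENNReal.ofReal_mul (by positivity)]
      exact ENNReal.ofReal_le_ofReal (hptR i ω)
    calc ∫⁻ ω, ((‖Y i ω‖₊:ℝ≥0∞)) ^ (2*m) ∂P
        ≤ ∫⁻ ω, ENNReal.ofReal ((2:ℝ)^(2*m)) * ((‖Z i ω‖₊:ℝ≥0∞) ^ (4*m) + 1) ∂P :=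
          lintegral_mono hpt
      _ = ENNReal.ofReal ((2:ℝ)^(2*m)) * ((∫⁻ ω, ((‖Z i ω‖₊:ℝ≥0∞))^(4*m) ∂P) + 1) := by
          rw [lintegral_const_mul' _ _ ENNReal.ofReal_ne_top,
            lintegral_add_right _ measurable_const, lintegral_one, measure_univ]
      _ ≤ ENNReal.ofReal ((2:ℝ)^(2*m)) * (ENNReal.ofReal η + ENNReal.ofReal η) := by
          gcongr
          · exact hmom i j
          · exact ENNReal.one_le_ofReal.mpr hη
      _ = ENNReal.ofReal K := by
          rw [← ENNReal.ofReal_add hη0 hη0, ← ENNReal.ofReal_mul (by positivity), hKdef]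
          congr 1
          ring
  obtain ⟨hSint, hSbound⟩ := moment_sum_bound hn hYmeas hYindep hYcent hm.ne' hK1 hKbd
  -- Markov / Chebyshev step
  set D : ℝ := (((m+1) * (m+1)^(2*m) * n^m : ℕ) : ℝ) with hDdef
  set a : ℝ := (n:ℝ)/2 with hadef
  have ha : 0 < a := by rw [hadef]; positivity
  have hofa : ENNReal.ofReal (a^(2*m)) ≠ 0 := by
    rw [← ENNReal.ofReal_zero, Ne, ENNReal.ofReal_eq_ofReal_iff (by positivity) le_rfl]
    positivity
  have harith : D * K / a^(2*m) = C * ((n:ℝ)^m)⁻¹ * η := by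
    have h3 : ((n:ℝ)^m) ≠ 0 := by positivity
    have h4 : ((n:ℝ)) ≠ 0 := hnR.ne'
    rw [hDdef, hKdef, hadef, hCdef]
    rw [div_pow]
    push_cast
    field_simp
    ring
  have hmain : ∀ E : Set Ω, (∀ ω ∈ E, a ≤ |∑ i, Y i ω|) →
      P E ≤ ENNReal.ofReal (C * ((n:ℝ)^m)⁻¹ * η) := by
    intro E hE
    have hsub : E ⊆ {ω | ENNReal.ofReal (a^(2*m)) ≤ ENNReal.ofReal ((∑ i, Y i ω) ^ (2*m))} := by
      intro ω hω
      have h1 : a^(2*m) ≤ |∑ i, Y i ω|^(2*m) := pow_le_pow_left₀ ha.le (hE ω hω) _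
      rw [Even.pow_abs ⟨m, by ring⟩] at h1
      exact ENNReal.ofReal_le_ofReal h1
    have hmeasg : AEMeasurable (fun ω => ENNReal.ofReal ((∑ i, Y i ω) ^ (2*m))) P := by
      have hSmeas : Measurable fun ω => ∑ i, Y i ω :=
        Finset.measurable_sum _ fun i _ => hYmeas i
      exact ((hSmeas.pow_const _).ennreal_ofReal).aemeasurable
    have h2 := mul_meas_ge_le_lintegral₀ hmeasg (ENNReal.ofReal (a^(2*m)))
    have h3 : ∫⁻ ω, ENNReal.ofReal ((∑ i, Y i ω) ^ (2*m)) ∂P ≤ ENNReal.ofReal (D * K) := by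
      rw [← ofReal_integral_eq_lintegral_ofReal hSint
        (Eventually.of_forall fun ω => Even.pow_nonneg ⟨m, by ring⟩ _)]
      exact ENNReal.ofReal_le_ofReal (le_trans hSbound (le_of_eq (by rw [hDdef])))
    calc P E ≤ P {ω | ENNReal.ofReal (a^(2*m)) ≤ ENNReal.ofReal ((∑ i, Y i ω) ^ (2*m))} :=
          measure_mono hsub
      _ ≤ (ENNReal.ofReal (D*K)) / ENNReal.ofReal (a^(2*m)) := by
          rw [ENNReal.le_div_iff_mul_le (Or.inl hofa) (Or.inl ENNReal.ofReal_ne_top)]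
          calc P _ * ENNReal.ofReal (a^(2*m)) = ENNReal.ofReal (a^(2*m)) * P _ := mul_comm _ _
            _ ≤ ∫⁻ ω, ENNReal.ofReal ((∑ i, Y i ω) ^ (2*m)) ∂P := h2
            _ ≤ ENNReal.ofReal (D*K) := h3
      _ = ENNReal.ofReal ((D*K) / (a^(2*m))) := (ENNReal.ofReal_div_of_pos (by positivity)).symm
      _ ≤ ENNReal.ofReal (C*((n:ℝ)^m)⁻¹*η) := ENNReal.ofReal_le_ofReal (le_of_eq harith)
  -- relate estLam to the sum
  have hLam : ∀ ω, estLam ψ (fun i => X i ω) j / Λ j = ((∑ i, Y i ω) + n) / n := by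
    intro ω
    have hS : (∑ i, Y i ω) + n = ∑ i, ⟪X i ω, ψ j⟫^2 / Λ j := by
      simp only [hYdef]
      rw [Finset.sum_sub_distrib, Finset.sum_const, Finset.card_univ, Fintype.card_fin,
        nsmul_eq_mul, mul_one]
      ring
    rw [estLam, hS, ← Finset.sum_div, inv_mul_eq_div, div_div, div_div, mul_comm]
  constructor
  · refine hmain _ fun ω hω => ?_
    have hω' : w₁ ≤ ((∑ i, Y i ω) + n) / n := by rwa [Set.mem_setOf_eq, hLam ω] at hω
    have h1 : w₁ * n ≤ (∑ i, Y i ω) + n := (le_div_iff₀ hnR).mp hω'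
    have h1' : 2 * (n:ℝ) ≤ w₁ * n := mul_le_mul_of_nonneg_right hw₁ hnR.le
    have h2 : a ≤ ∑ i, Y i ω := by linarith
    exact le_trans h2 (le_abs_self _)
  · refine hmain _ fun ω hω => ?_
    have hω' : ((∑ i, Y i ω) + n) / n < w₂ := by rwa [Set.mem_setOf_eq, hLam ω] at hω
    have h1 : (∑ i, Y i ω) + n < w₂ * n := (div_lt_iff₀ hnR).mp hω'
    have h1' : w₂ * n ≤ (1/2) * (n:ℝ) := mul_le_mul_of_nonneg_right hw₂ hnR.le
    have h2 : a ≤ -(∑ i, Y i ω) := by linarith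
    exact le_trans h2 (neg_le_abs _)
end

section
/- Deterministic inequalities for the Assouad construction: Let the sequences ω, γ, υ satisfy Assumption REG, let σ > 0, d ≥ 1, ρ > 0, n ∈ ℕ, and let k* ∈ ℕ and Δ ≥ 1 satisfy the rate condition, with δ* := ω_{k*}/γ_{k*}. Define ζ := min(σ²/(2d), ρ/Δ) and b_j² := ζ/(n·υ_j) for all j ≥ 1. Then: (i) (2dn/σ²)·b_j²·υ_j ≤ 1 for all j ≥ 1; (ii) Σ_{j=1}^{k*} b_j²·γ_j ≤ ρ; and (iii) Σ_{j=1}^{k*} b_j²·ω_j ≥ min(σ²/(2d), ρ/Δ)·max(δ*, 1/n)/Δ. -/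
open MeasureTheory ProbabilityTheory Filter
open scoped ENNReal NNReal RealInnerProductSpace BigOperators

/-- Deterministic inequalities for the Assouad construction.
Sequences are indexed by `ℕ` starting at `0` (paper index `j` ↔ `j-1` here); in particular
`k* : ℕ` below denotes the paper's `k* - 1`, so that sums `∑_{j=1}^{k*}` become sums over
`Finset.range (kstar + 1)`. -/
theorem stmt14
    -- Assumption REG
    (ωw γ υ : ℕ → ℝ)
    (hωpos : ∀ j, 0 < ωw j) (hγpos : ∀ j, 0 < γ j) (hυpos : ∀ j, 0 < υ j)
    (hω1 : ωw 0 = 1) (hγ1 : γ 0 = 1) (hυ1 : υ 0 = 1)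
    (hγmono : Monotone γ) (hγωmono : Monotone fun j => γ j / ωw j)
    (hυanti : Antitone υ) (hυsum : Summable υ)
    -- parameters
    (σ d ρ : ℝ) (hσ : 0 < σ) (hd : 1 ≤ d) (hρ : 0 < ρ)
    (n : ℕ) (hn : 0 < n) (kstar : ℕ) (Δ : ℝ) (hΔ : 1 ≤ Δ)
    -- rate condition
    (hrate₁ : 1 / Δ ≤ γ kstar / (n * ωw kstar) * ∑ j ∈ Finset.range (kstar + 1), ωw j / υ j)
    (hrate₂ : γ kstar / (n * ωw kstar) * ∑ j ∈ Finset.range (kstar + 1), ωw j / υ j ≤ Δ)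
    -- the Assouad coefficients b_j² = ζ/(n υ_j) with ζ = min(σ²/(2d), ρ/Δ)
    (ζ : ℝ) (hζ : ζ = min (σ ^ 2 / (2 * d)) (ρ / Δ))
    (b : ℕ → ℝ) (hb : ∀ j, b j ^ 2 = ζ / (n * υ j))
    -- δ* = ω_{k*}/γ_{k*}
    (δstar : ℝ) (hδ : δstar = ωw kstar / γ kstar) :
    (∀ j, 2 * d * n / σ ^ 2 * (b j ^ 2 * υ j) ≤ 1) ∧
    (∑ j ∈ Finset.range (kstar + 1), b j ^ 2 * γ j ≤ ρ) ∧
    (min (σ ^ 2 / (2 * d)) (ρ / Δ) * max δstar (1 / n) / Δ ≤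
      ∑ j ∈ Finset.range (kstar + 1), b j ^ 2 * ωw j) := by
  have hn' : (0:ℝ) < n := by exact_mod_cast hn
  have hΔpos : (0:ℝ) < Δ := lt_of_lt_of_le one_pos hΔ
  have hdpos : (0:ℝ) < d := lt_of_lt_of_le one_pos hd
  have hζpos : 0 < ζ := by
    rw [hζ]; exact lt_min (by positivity) (by positivity)
  have hζ1 : ζ ≤ σ ^ 2 / (2 * d) := hζ ▸ min_le_left _ _
  have hζ2 : ζ ≤ ρ / Δ := hζ ▸ min_le_right _ _
  set S := ∑ j ∈ Finset.range (kstar + 1), ωw j / υ j with hS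
  have hSone : (1:ℝ) ≤ S := by
    have h0 : ωw 0 / υ 0 = 1 := by rw [hω1, hυ1]; norm_num
    calc (1:ℝ) = ωw 0 / υ 0 := h0.symm
      _ ≤ S := Finset.single_le_sum (f := fun j => ωw j / υ j)
          (fun j _ => by have := hωpos j; have := hυpos j; positivity)
          (Finset.mem_range.mpr (Nat.succ_pos _))
  refine ⟨?_, ?_, ?_⟩
  · intro j
    have hb' : b j ^ 2 * υ j = ζ / n := by
      rw [hb j]
      have := (hυpos j).ne'
      field_simp
      try ring
    rw [hb']
    have : 2 * d * n / σ ^ 2 * (ζ / n) ≤ 2 * d * n / σ ^ 2 * (σ ^ 2 / (2 * d) / n) := by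
      gcongr
    refine this.trans_eq ?_
    field_simp
    try ring
  · have hterm : ∀ j ∈ Finset.range (kstar + 1),
        b j ^ 2 * γ j ≤ ζ / n * (γ kstar / ωw kstar * (ωw j / υ j)) := by
      intro j hj
      have hjk : j ≤ kstar := Nat.lt_succ_iff.mp (Finset.mem_range.mp hj)
      have hmon : γ j / ωw j ≤ γ kstar / ωw kstar := hγωmono hjk
      rw [hb j]
      have heq : ζ / (n * υ j) * γ j = ζ / n * (γ j / ωw j * (ωw j / υ j)) := by
        have := (hυpos j).ne'
        have := (hωpos j).ne'
        field_simp
        try ring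
      rw [heq]
      have hc : (0:ℝ) ≤ ωw j / υ j := le_of_lt (div_pos (hωpos j) (hυpos j))
      have hz : (0:ℝ) ≤ ζ / n := by positivity
      exact mul_le_mul_of_nonneg_left (mul_le_mul_of_nonneg_right hmon hc) hz
    calc ∑ j ∈ Finset.range (kstar + 1), b j ^ 2 * γ j
        ≤ ∑ j ∈ Finset.range (kstar + 1), ζ / n * (γ kstar / ωw kstar * (ωw j / υ j)) :=
          Finset.sum_le_sum hterm
      _ = ζ / n * (γ kstar / ωw kstar) * S := by
          simp only [← mul_assoc]
          rw [hS, ← Finset.mul_sum]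
      _ = ζ * (γ kstar / (n * ωw kstar) * S) := by
          have := (hωpos kstar).ne'
          field_simp
          try ring
      _ ≤ ζ * Δ := by
          exact mul_le_mul_of_nonneg_left hrate₂ hζpos.le
      _ ≤ (ρ / Δ) * Δ := mul_le_mul_of_nonneg_right hζ2 hΔpos.le
      _ = ρ := by field_simp
  · have hsum : ∑ j ∈ Finset.range (kstar + 1), b j ^ 2 * ωw j = ζ / n * S := by
      rw [hS, Finset.mul_sum]
      refine Finset.sum_congr rfl fun j _ => ?_
      rw [hb j]
      have := (hυpos j).ne'
      field_simp
      try ring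
    rw [hsum, ← hζ]
    rcases max_choice δstar (1 / (n:ℝ)) with h | h <;> rw [h]
    · -- δstar case: use hrate₁
      have hc : (0:ℝ) < γ kstar / (n * ωw kstar) :=
        div_pos (hγpos kstar) (mul_pos hn' (hωpos kstar))
      have hS' : (1 / Δ) / (γ kstar / (n * ωw kstar)) ≤ S := by
        rw [div_le_iff₀ hc, mul_comm]; exact hrate₁
      calc ζ * δstar / Δ = ζ / n * ((1 / Δ) / (γ kstar / (n * ωw kstar))) := by
            rw [hδ]
            have := (hγpos kstar).ne'
            have := (hωpos kstar).ne'
            field_simp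
            try ring
        _ ≤ ζ / n * S := by
            have hz : (0:ℝ) ≤ ζ / n := by positivity
            exact mul_le_mul_of_nonneg_left hS' hz
    · -- 1/n case: use S ≥ 1 ≥ 1/Δ
      have h1 : (1:ℝ) / Δ ≤ S := le_trans (by rw [div_le_one hΔpos]; exact hΔ) hSone
      calc ζ * (1 / (n:ℝ)) / Δ = ζ / n * (1 / Δ) := by field_simp
        _ ≤ ζ / n * S := by
            have hz : (0:ℝ) ≤ ζ / n := by positivity
            exact mul_le_mul_of_nonneg_left h1 hz
end

section
/- Bias-type bound for the truncated coefficients: Suppose X ∈ 𝒳^4_η for some η ≥ 1, let the strictly positive sequences ω and γ satisfy ω_1 = γ_1 = 1 with (γ_j/ω_j) nondecreasing, let β satisfy ‖β‖_γ < ∞, let m ∈ ℕ, α > 0, and assume λ_j ≥ 2α for all 1 ≤ j ≤ m. Then there exists a universal constant C > 0 such that E‖β̃_m − β‖²_ω ≤ C·(ω_m/γ_m + η/n)·‖β‖²_γ. -/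
open MeasureTheory ProbabilityTheory Filter
open scoped ENNReal NNReal RealInnerProductSpace BigOperators

lemma cheb_aux {Ω : Type*} [MeasurableSpace Ω] (P : Measure Ω) [IsProbabilityMeasure P]
    {n : ℕ} (hn : 0 < n) (W : Fin n → Ω → ℝ)
    (hindep : iIndepFun W P)
    (hL2 : ∀ i, MemLp (W i) 2 P)
    (lam η α : ℝ) (hlam : 0 < lam)
    (hmean : ∀ i, ∫ ω, W i ω ∂P = lam)
    (hvar : ∀ i, variance (W i) P ≤ η * lam ^ 2)
    (hα : 2 * α ≤ lam) :
    P {ω | (n:ℝ)⁻¹ * ∑ i, W i ω < α} ≤ ENNReal.ofReal (4 * η / n) := by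
  have hn' : (0:ℝ) < n := Nat.cast_pos.2 hn
  have hη : 0 ≤ η := by
    have h0 := variance_nonneg (W ⟨0, hn⟩) P
    have hl2 : (0:ℝ) < lam ^ 2 := by positivity
    nlinarith [hvar ⟨0, hn⟩]
  set T : Ω → ℝ := ∑ i, W i with hT
  have hTL2 : MemLp T 2 P := memLp_finset_sum' _ (fun i _ => hL2 i)
  have hTeval : ∀ ω, T ω = ∑ i, W i ω := by
    intro ω; simp [hT, Finset.sum_apply]
  have hTmean : ∫ ω, T ω ∂P = n * lam := by
    calc ∫ ω, T ω ∂P = ∫ ω, ∑ i, W i ω ∂P := by simp [hTeval]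
    _ = ∑ i : Fin n, ∫ ω, W i ω ∂P :=
      integral_finset_sum _ (fun i _ => (hL2 i).integrable one_le_two)
    _ = n * lam := by simp [hmean, Finset.sum_const, mul_comm]
  have hc : (0:ℝ) < n * lam / 2 := by positivity
  have hsub : {ω | (n:ℝ)⁻¹ * ∑ i, W i ω < α} ⊆
      {ω | n * lam / 2 ≤ |T ω - ∫ ω, T ω ∂P|} := by
    intro ω hω
    simp only [Set.mem_setOf_eq] at hω ⊢
    rw [hTmean, hTeval]
    have h1 : (∑ i, W i ω) < n * α := by
      have := (inv_mul_lt_iff₀ hn').1 hω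
      linarith
    rw [abs_sub_comm]
    rw [le_abs]
    left
    nlinarith
  calc P {ω | (n:ℝ)⁻¹ * ∑ i, W i ω < α}
      ≤ P {ω | n * lam / 2 ≤ |T ω - ∫ ω, T ω ∂P|} := measure_mono hsub
    _ ≤ ENNReal.ofReal (variance T P / (n * lam / 2) ^ 2) :=
        meas_ge_le_variance_div_sq hTL2 hc
    _ ≤ ENNReal.ofReal (4 * η / n) := by
        apply ENNReal.ofReal_le_ofReal
        have hVT : variance T P ≤ n * (η * lam ^ 2) := by
          rw [hT, IndepFun.variance_sum (fun i _ => hL2 i)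
            (fun i _ j _ hij => hindep.indepFun hij)]
          calc ∑ i : Fin n, variance (W i) P ≤ ∑ _i : Fin n, η * lam ^ 2 :=
            Finset.sum_le_sum (fun i _ => hvar i)
          _ = n * (η * lam ^ 2) := by simp [Finset.sum_const, mul_comm]
        rw [div_le_div_iff₀ (by positivity) hn']
        nlinarith

lemma moment_aux {Ω : Type*} [MeasurableSpace Ω] (P : Measure Ω) [IsProbabilityMeasure P]
    {f : Ω → ℝ} (hf : Measurable f) {lam η : ℝ} (hlam : 0 < lam) (hη : 0 ≤ η)
    (hmom : ∫⁻ ω, (‖f ω / Real.sqrt lam‖₊ : ℝ≥0∞) ^ (4:ℕ) ∂P ≤ ENNReal.ofReal η) :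
    MemLp (fun ω => f ω ^ 2) 2 P ∧ variance (fun ω => f ω ^ 2) P ≤ η * lam ^ 2 := by
  have hs : Real.sqrt lam ≠ 0 := by positivity
  have hpt : ∀ ω, (‖f ω‖₊ : ℝ≥0∞) ^ (4:ℕ) =
      (‖f ω / Real.sqrt lam‖₊ : ℝ≥0∞) ^ (4:ℕ) * ENNReal.ofReal (lam ^ 2) := by
    intro ω
    have h1 : f ω = f ω / Real.sqrt lam * Real.sqrt lam := by
      field_simp
    have h2 : (‖Real.sqrt lam‖₊ : ℝ≥0∞) ^ (4:ℕ) = ENNReal.ofReal (lam ^ 2) := by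
      have h3 : (‖Real.sqrt lam‖₊ : ℝ≥0∞) = ENNReal.ofReal (Real.sqrt lam) := by
        rw [← enorm_eq_nnnorm, ← ofReal_norm, Real.norm_eq_abs,
          abs_of_nonneg (Real.sqrt_nonneg _)]
      rw [h3, ← ENNReal.ofReal_pow (Real.sqrt_nonneg _)]
      congr 1
      rw [show (4:ℕ) = 2 * 2 by norm_num, pow_mul, Real.sq_sqrt hlam.le]
    calc (‖f ω‖₊ : ℝ≥0∞) ^ (4:ℕ)
        = (‖f ω / Real.sqrt lam * Real.sqrt lam‖₊ : ℝ≥0∞) ^ (4:ℕ) := by rw [← h1]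
      _ = ((‖f ω / Real.sqrt lam‖₊ : ℝ≥0∞) * (‖Real.sqrt lam‖₊ : ℝ≥0∞)) ^ (4:ℕ) := by
          rw [nnnorm_mul]; push_cast; ring
      _ = (‖f ω / Real.sqrt lam‖₊ : ℝ≥0∞) ^ (4:ℕ) * ENNReal.ofReal (lam ^ 2) := by
          rw [mul_pow, h2]
  have hkey : ∫⁻ ω, (‖f ω‖₊ : ℝ≥0∞) ^ (4:ℕ) ∂P ≤ ENNReal.ofReal (η * lam ^ 2) := by
    calc ∫⁻ ω, (‖f ω‖₊ : ℝ≥0∞) ^ (4:ℕ) ∂P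
        = ∫⁻ ω, (‖f ω / Real.sqrt lam‖₊ : ℝ≥0∞) ^ (4:ℕ) * ENNReal.ofReal (lam ^ 2) ∂P := by
          simp_rw [hpt]
      _ = (∫⁻ ω, (‖f ω / Real.sqrt lam‖₊ : ℝ≥0∞) ^ (4:ℕ) ∂P) * ENNReal.ofReal (lam ^ 2) :=
          lintegral_mul_const _ (((hf.div_const _).nnnorm.coe_nnreal_ennreal).pow_const _)
      _ ≤ ENNReal.ofReal η * ENNReal.ofReal (lam ^ 2) := by
          exact mul_le_mul_left hmom _
      _ = ENNReal.ofReal (η * lam ^ 2) := by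
          rw [← ENNReal.ofReal_mul hη]
  have hptr : ∀ ω, ENNReal.ofReal ((f ω ^ 2) ^ 2) = (‖f ω‖₊ : ℝ≥0∞) ^ (4:ℕ) := by
    intro ω
    have : (f ω ^ 2) ^ 2 = ‖f ω‖ ^ 4 := by
      rw [Real.norm_eq_abs, ← abs_pow]
      rw [abs_of_nonneg (by positivity)]
      ring
    rw [this, ← enorm_eq_nnnorm, ← ofReal_norm, ← ENNReal.ofReal_pow (norm_nonneg _)]
  have hint4 : Integrable (fun ω => (f ω ^ 2) ^ 2) P := by
    refine ⟨((hf.pow_const 2).pow_const 2).aestronglyMeasurable, ?_⟩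
    rw [hasFiniteIntegral_iff_ofReal (Eventually.of_forall fun ω => by positivity)]
    simp_rw [hptr]
    exact lt_of_le_of_lt hkey ENNReal.ofReal_lt_top
  have hmem : MemLp (fun ω => f ω ^ 2) 2 P :=
    (memLp_two_iff_integrable_sq (hf.pow_const 2).aestronglyMeasurable).2 hint4
  refine ⟨hmem, ?_⟩
  have hvle := variance_le_expectation_sq (μ := P) (hf.pow_const 2).aestronglyMeasurable
  refine hvle.trans ?_
  have hE : ∫ ω, ((fun ω => f ω ^ 2) ^ 2) ω ∂P = (∫⁻ ω, (‖f ω‖₊ : ℝ≥0∞) ^ (4:ℕ) ∂P).toReal := by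
    simp only [Pi.pow_apply]
    rw [integral_eq_lintegral_of_nonneg_ae (Eventually.of_forall fun ω => by positivity)
      ((hf.pow_const 2).pow_const 2).aestronglyMeasurable]
    congr 1
    exact lintegral_congr fun ω => hptr ω
  rw [hE]
  calc (∫⁻ ω, (‖f ω‖₊ : ℝ≥0∞) ^ (4:ℕ) ∂P).toReal ≤ (ENNReal.ofReal (η * lam ^ 2)).toReal :=
        ENNReal.toReal_mono ENNReal.ofReal_ne_top hkey
    _ = η * lam ^ 2 := ENNReal.toReal_ofReal (by positivity)

lemma trunc_inner {H : Type*} [NormedAddCommGroup H] [InnerProductSpace ℝ H]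
    (ψ : ℕ → H) (hψ : Orthonormal ℝ ψ) (β : H) {n : ℕ} (m : ℕ) (α : ℝ)
    (Xs : Fin n → H) (j : ℕ) :
    ⟪truncBeta ψ β m α Xs - β, ψ j⟫ =
      (if j < m then (if α ≤ estLam ψ Xs j then ⟪β, ψ j⟫ else 0) else 0) - ⟪β, ψ j⟫ := by
  rw [inner_sub_left]
  congr 1
  rw [truncBeta, sum_inner]
  simp only [real_inner_smul_left]
  have hite : ∀ k, ⟪ψ k, ψ j⟫ = if k = j then (1:ℝ) else 0 := fun k =>
    orthonormal_iff_ite.1 hψ k j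
  simp only [hite, mul_ite, mul_one, mul_zero]
  rw [Finset.sum_ite_eq' (Finset.range m) j]
  simp [Finset.mem_range]

/-- Bias-type bound for the truncated coefficients.  Indices are `0`-based:
`m : ℕ` here corresponds to the paper's dimension `m + 1`, so `β̃` keeps the coefficients
`j ∈ {0, …, m}`, the weights `ω_m, γ_m` of the paper become `ωw m, γ m`, and the threshold
condition reads `λ_j ≥ 2α` for all `j ≤ m`.  If `X ∈ 𝒳⁴_η`, `(γ_j/ω_j)` is nondecreasing and
`‖β‖_γ < ∞`, then for a universal constant `C > 0`,
`E‖β̃_m - β‖²_ω ≤ C (ω_m/γ_m + η/n) ‖β‖²_γ`. -/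
theorem stmt16 :
    ∃ C : ℝ, 0 < C ∧
      ∀ (H : Type*) [NormedAddCommGroup H] [InnerProductSpace ℝ H] [CompleteSpace H]
        [MeasurableSpace H] [BorelSpace H]
        (Ω : Type*) [MeasurableSpace Ω] (P : Measure Ω) [IsProbabilityMeasure P]
        (ψ : ℕ → H) (_hψ : Orthonormal ℝ ψ)
        (n : ℕ) (_hn : 0 < n) (X : Fin n → Ω → H)
        (_hXmeas : ∀ i, Measurable (X i))
        (_hindep : iIndepFun X P)
        (_hident : ∀ i i', IdentDistrib (X i) (X i') P P)
        (_hXcent : ∀ i, ∫ ω, X i ω ∂P = 0)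
        (_hX2 : ∀ i, MemLp (X i) 2 P)
        (Λ : ℕ → ℝ) (_hΛpos : ∀ j, 0 < Λ j)
        (_hstat : ∀ i j k,
          ∫ ω, ⟪X i ω, ψ j⟫ * ⟪X i ω, ψ k⟫ ∂P = if j = k then Λ j else 0)
        -- moment class `X ∈ 𝒳⁴_η`
        (η : ℝ) (_hη : 1 ≤ η)
        (_hXmom : ∀ (i : Fin n) (j : ℕ),
          ∫⁻ ω, (‖⟪X i ω, ψ j⟫ / Real.sqrt (Λ j)‖₊ : ℝ≥0∞) ^ (4 : ℕ) ∂P ≤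
            ENNReal.ofReal η)
        -- weights
        (ωw γ : ℕ → ℝ) (_hωpos : ∀ j, 0 < ωw j) (_hγpos : ∀ j, 0 < γ j)
        (_hω1 : ωw 0 = 1) (_hγ1 : γ 0 = 1)
        (_hγωmono : Monotone fun j => γ j / ωw j)
        -- slope with ‖β‖_γ < ∞
        (β : H) (_hβγ : wNormSq ψ γ β ≠ ⊤)
        -- dimension and threshold
        (m : ℕ) (α : ℝ) (_hα : 0 < α) (_hΛα : ∀ j ≤ m, 2 * α ≤ Λ j),
        ∫⁻ ω, wNormSq ψ ωw (truncBeta ψ β (m + 1) α (fun i => X i ω) - β) ∂P ≤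
          ENNReal.ofReal
            (C * (ωw m / γ m + η / n) * (wNormSq ψ γ β).toReal) := by
  refine ⟨4, by norm_num, ?_⟩
  intro H iH1 iH2 iH3 iH4 iH5 Ω iΩ P iP ψ hψ n hn X hXmeas hindep _hident _hXcent _hX2
    Λ hΛpos hstat η hη hXmom ωw γ hωpos hγpos hω1 hγ1 hγωmono β hβγ m α hα hΛα
  have hn' : (0:ℝ) < n := Nat.cast_pos.2 hn
  have hη0 : (0:ℝ) ≤ η := le_trans zero_le_one hη
  set K : ℝ := ωw m / γ m + 4 * η / n with hK
  have hK0 : 0 ≤ K := by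
    rw [hK]
    have h5 : (0:ℝ) ≤ ωw m / γ m := div_nonneg (hωpos m).le (hγpos m).le
    have h6 : (0:ℝ) ≤ 4 * η / n := div_nonneg (by linarith) hn'.le
    linarith
  have hωγ : ∀ j, ωw j ≤ γ j := by
    intro j
    have h1 : (1:ℝ) ≤ γ j / ωw j := by
      have := hγωmono (Nat.zero_le j)
      simpa [hγ1, hω1] using this
    exact (one_le_div (hωpos j)).1 h1
  have hinmeas : ∀ (i : Fin n) (j : ℕ), Measurable fun ω => (⟪X i ω, ψ j⟫ : ℝ) := by
    intro i j
    exact ((continuous_id.inner (continuous_const : Continuous fun _ : H => ψ j)).measurable).comp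
      (hXmeas i)
  have hLamMeas : ∀ j, Measurable fun ω => estLam ψ (fun i => X i ω) j := by
    intro j
    have h : Measurable fun ω => ∑ i : Fin n, (⟪X i ω, ψ j⟫ : ℝ) ^ 2 :=
      Finset.measurable_sum _ (fun i _ => (hinmeas i j).pow_const 2)
    exact h.const_mul _
  set E : ℕ → Set Ω := fun j => {ω | estLam ψ (fun i => X i ω) j < α} with hEdef
  have hEmeas : ∀ j, MeasurableSet (E j) := fun j =>
    measurableSet_lt (hLamMeas j) measurable_const
  have hPE : ∀ j ≤ m, P (E j) ≤ ENNReal.ofReal (4 * η / n) := by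
    intro j hj
    have hcomp : iIndepFun (fun i ω => (⟪X i ω, ψ j⟫ : ℝ) ^ 2) P :=
      hindep.comp (fun _ x => (⟪x, ψ j⟫ : ℝ) ^ 2)
        (fun _ => ((continuous_id.inner
          (continuous_const : Continuous fun _ : H => ψ j)).measurable).pow_const 2)
    have hma : ∀ i : Fin n, MemLp (fun ω => (⟪X i ω, ψ j⟫ : ℝ) ^ 2) 2 P ∧
        variance (fun ω => (⟪X i ω, ψ j⟫ : ℝ) ^ 2) P ≤ η * (Λ j) ^ 2 := fun i =>
      moment_aux P (hinmeas i j) (hΛpos j) hη0 (hXmom i j)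
    have hmean : ∀ i : Fin n, ∫ ω, (⟪X i ω, ψ j⟫ : ℝ) ^ 2 ∂P = Λ j := by
      intro i
      simpa [pow_two] using hstat i j j
    have hch := cheb_aux P hn (fun i ω => (⟪X i ω, ψ j⟫ : ℝ) ^ 2) hcomp (fun i => (hma i).1)
      (Λ j) η α (hΛpos j) hmean (fun i => (hma i).2) (hΛα j hj)
    simpa [hEdef, estLam] using hch
  have hpt : ∀ ω : Ω, wNormSq ψ ωw (truncBeta ψ β (m+1) α (fun i => X i ω) - β) =
      ∑' j, (if j ≤ m then (E j).indicator
          (fun _ => ENNReal.ofReal (ωw j * (⟪β, ψ j⟫ : ℝ) ^ 2)) ω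
        else ENNReal.ofReal (ωw j * (⟪β, ψ j⟫ : ℝ) ^ 2)) := by
    intro ω
    rw [wNormSq]
    refine tsum_congr fun j => ?_
    rw [trunc_inner ψ hψ β (m+1) α (fun i => X i ω) j]
    by_cases hj : j ≤ m
    · have hj' : j < m + 1 := Nat.lt_succ_of_le hj
      by_cases hcond : α ≤ estLam ψ (fun i => X i ω) j
      · have hnot : ω ∉ E j := by
          simp only [hEdef, Set.mem_setOf_eq]
          exact not_lt.2 hcond
        simp [hj', hj, hcond, Set.indicator_of_notMem hnot]
      · have hmem : ω ∈ E j := by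
          simp only [hEdef, Set.mem_setOf_eq]
          exact lt_of_not_ge hcond
        simp [hj', hj, hcond, Set.indicator_of_mem hmem, zero_sub, neg_sq]
    · have hj' : ¬ j < m + 1 := by omega
      simp [hj', hj, zero_sub, neg_sq]
  have hterm : ∀ j : ℕ,
      (∫⁻ ω, (if j ≤ m then (E j).indicator
          (fun _ => ENNReal.ofReal (ωw j * (⟪β, ψ j⟫ : ℝ) ^ 2)) ω
        else ENNReal.ofReal (ωw j * (⟪β, ψ j⟫ : ℝ) ^ 2)) ∂P)
      ≤ ENNReal.ofReal (γ j * (⟪β, ψ j⟫ : ℝ) ^ 2) * ENNReal.ofReal K := by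
    intro j
    by_cases hj : j ≤ m
    · simp only [hj, if_true]
      rw [lintegral_indicator_const (hEmeas j)]
      apply mul_le_mul'
      · exact ENNReal.ofReal_le_ofReal
          (mul_le_mul_of_nonneg_right (hωγ j) (sq_nonneg _))
      · refine (hPE j hj).trans (ENNReal.ofReal_le_ofReal ?_)
        have h5 : (0:ℝ) ≤ ωw m / γ m := div_nonneg (hωpos m).le (hγpos m).le
        rw [hK]; linarith
    · simp only [hj, if_false]
      rw [lintegral_const, measure_univ, mul_one,
        ← ENNReal.ofReal_mul (mul_nonneg (hγpos j).le (sq_nonneg _))]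
      apply ENNReal.ofReal_le_ofReal
      have hmle : m ≤ j := le_of_not_ge hj
      have hmono := hγωmono hmle
      simp only at hmono
      have h2 : γ m * ωw j ≤ γ j * ωw m := by
        rw [div_le_div_iff₀ (hωpos m) (hωpos j)] at hmono
        linarith
      have h3 : ωw j ≤ γ j * ωw m / γ m := by
        rw [le_div_iff₀ (hγpos m)]
        nlinarith
      have h6 : γ j * ωw m / γ m ≤ γ j * K := by
        rw [hK, mul_add]
        have h7 : 0 ≤ γ j * (4 * η / n) := mul_nonneg (hγpos j).le (div_nonneg (by linarith) hn'.le)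
        have h8 : γ j * ωw m / γ m = γ j * (ωw m / γ m) := by ring
        linarith [h8.le, h8.ge]
      have h4 : ωw j ≤ γ j * K := le_trans h3 h6
      nlinarith [sq_nonneg (⟪β, ψ j⟫ : ℝ)]
  calc ∫⁻ ω, wNormSq ψ ωw (truncBeta ψ β (m+1) α (fun i => X i ω) - β) ∂P
      = ∫⁻ ω, ∑' j, (if j ≤ m then (E j).indicator
          (fun _ => ENNReal.ofReal (ωw j * (⟪β, ψ j⟫ : ℝ) ^ 2)) ω
        else ENNReal.ofReal (ωw j * (⟪β, ψ j⟫ : ℝ) ^ 2)) ∂P := lintegral_congr hpt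
    _ = ∑' j, ∫⁻ ω, (if j ≤ m then (E j).indicator
          (fun _ => ENNReal.ofReal (ωw j * (⟪β, ψ j⟫ : ℝ) ^ 2)) ω
        else ENNReal.ofReal (ωw j * (⟪β, ψ j⟫ : ℝ) ^ 2)) ∂P := by
        refine lintegral_tsum fun j => ?_
        by_cases hj : j ≤ m
        · simpa [hj] using (measurable_const.indicator (hEmeas j)).aemeasurable
        · simpa [hj] using aemeasurable_const
    _ ≤ ∑' j, ENNReal.ofReal (γ j * (⟪β, ψ j⟫ : ℝ) ^ 2) * ENNReal.ofReal K :=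
        ENNReal.tsum_le_tsum hterm
    _ = wNormSq ψ γ β * ENNReal.ofReal K := by
        rw [ENNReal.tsum_mul_right, wNormSq]
    _ ≤ ENNReal.ofReal (4 * (ωw m / γ m + η / n) * (wNormSq ψ γ β).toReal) := by
        conv_lhs => rw [← ENNReal.ofReal_toReal hβγ]
        rw [← ENNReal.ofReal_mul ENNReal.toReal_nonneg]
        apply ENNReal.ofReal_le_ofReal
        have ht : 0 ≤ (wNormSq ψ γ β).toReal := ENNReal.toReal_nonneg
        have hKle : K ≤ 4 * (ωw m / γ m + η / n) := by
          rw [hK]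
          have h5 : (0:ℝ) ≤ ωw m / γ m := div_nonneg (hωpos m).le (hγpos m).le
          have h6 : 4 * η / n = 4 * (η / n) := by ring
          linarith [h6.le, h6.ge]
        nlinarith
end

section
/- Hellinger-affinity estimation inequality: Let μ be a σ-finite measure on a measurable space (Ω, 𝒜), let P and Q be probability measures on (Ω, 𝒜) absolutely continuous with respect to μ, with densities p and q, let f : Ω → ℝ be measurable, and let b, c ∈ ℝ with b ≠ c. Then ∫ √(p·q) dμ ≤ (∫ ((f − b)²/(b − c)²) dQ)^{1/2} + (∫ ((f − c)²/(b − c)²) dP)^{1/2}. -/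
open MeasureTheory ProbabilityTheory Filter
open scoped ENNReal NNReal RealInnerProductSpace BigOperators

noncomputable section
/-- Hellinger-affinity estimation inequality.  `P` and `Q` are probability
measures with densities `p`, `q` w.r.t. a σ-finite measure `μ`; for any measurable `f` and
reals `b ≠ c`,
`∫ √(pq) dμ ≤ (∫ (f-b)²/(b-c)² dQ)^{1/2} + (∫ (f-c)²/(b-c)² dP)^{1/2}`
(the integrals on the right are Lebesgue integrals in `ℝ≥0∞`, so that possibly infinite
second moments are allowed). -/
theorem stmt18 {Ω : Type*} [MeasurableSpace Ω] (μ : Measure Ω) [SigmaFinite μ]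
    (P Q : Measure Ω) [IsProbabilityMeasure P] [IsProbabilityMeasure Q]
    (p q : Ω → ℝ≥0∞) (hp : Measurable p) (hq : Measurable q)
    (hP : P = μ.withDensity p) (hQ : Q = μ.withDensity q)
    (f : Ω → ℝ) (hf : Measurable f) (b c : ℝ) (hbc : b ≠ c) :
    ∫⁻ ω, (p ω * q ω) ^ (1 / 2 : ℝ) ∂μ ≤
      (∫⁻ ω, ENNReal.ofReal ((f ω - b) ^ 2 / (b - c) ^ 2) ∂Q) ^ (1 / 2 : ℝ) +
      (∫⁻ ω, ENNReal.ofReal ((f ω - c) ^ 2 / (b - c) ^ 2) ∂P) ^ (1 / 2 : ℝ) := by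
  have hd : b - c ≠ 0 := sub_ne_zero.2 hbc
  set g : Ω → ℝ := fun ω => (f ω - b) / (b - c) with hg_def
  set h : Ω → ℝ := fun ω => (f ω - c) / (b - c) with hh_def
  have hgm : Measurable g := ((hf.sub measurable_const).div measurable_const)
  have hhm : Measurable h := ((hf.sub measurable_const).div measurable_const)
  have h22 : Real.HolderConjugate 2 2 := Real.holderConjugate_iff.mpr ⟨one_lt_two, by norm_num⟩
  -- pointwise bound
  have hpt : ∀ ω, (p ω * q ω) ^ (1 / 2 : ℝ) ≤
      (q ω ^ (1/2 : ℝ) * ENNReal.ofReal |g ω|) * p ω ^ (1/2 : ℝ) +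
      (p ω ^ (1/2 : ℝ) * ENNReal.ofReal |h ω|) * q ω ^ (1/2 : ℝ) := by
    intro ω
    have h1 : (1 : ℝ) ≤ |g ω| + |h ω| := by
      have : g ω - h ω = -1 := by
        simp only [hg_def, hh_def]; rw [← sub_div, div_eq_iff hd]; ring
      calc (1 : ℝ) = |g ω - h ω| := by rw [this]; norm_num
        _ ≤ |g ω| + |h ω| := abs_sub _ _
    have h2 : (1 : ℝ≥0∞) ≤ ENNReal.ofReal |g ω| + ENNReal.ofReal |h ω| := by
      rw [← ENNReal.ofReal_add (abs_nonneg _) (abs_nonneg _), ← ENNReal.ofReal_one]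
      exact ENNReal.ofReal_le_ofReal h1
    have hmul : (p ω * q ω) ^ (1 / 2 : ℝ) = p ω ^ (1/2 : ℝ) * q ω ^ (1/2 : ℝ) :=
      ENNReal.mul_rpow_of_nonneg _ _ (by norm_num)
    calc (p ω * q ω) ^ (1 / 2 : ℝ)
        = p ω ^ (1/2 : ℝ) * q ω ^ (1/2 : ℝ) * 1 := by rw [hmul, mul_one]
      _ ≤ p ω ^ (1/2 : ℝ) * q ω ^ (1/2 : ℝ) *
          (ENNReal.ofReal |g ω| + ENNReal.ofReal |h ω|) := by
          exact mul_le_mul_right h2 _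
      _ = (q ω ^ (1/2 : ℝ) * ENNReal.ofReal |g ω|) * p ω ^ (1/2 : ℝ) +
          (p ω ^ (1/2 : ℝ) * ENNReal.ofReal |h ω|) * q ω ^ (1/2 : ℝ) := by ring
  have hq2 : Measurable fun ω => q ω ^ (1/2 : ℝ) * ENNReal.ofReal |g ω| :=
    (hq.pow_const _).mul (ENNReal.measurable_ofReal.comp hgm.abs)
  have hp2 : Measurable fun ω => p ω ^ (1/2 : ℝ) * ENNReal.ofReal |h ω| :=
    (hp.pow_const _).mul (ENNReal.measurable_ofReal.comp hhm.abs)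
  have hPone : ∫⁻ ω, p ω ∂μ = 1 := by
    have := measure_univ (μ := P)
    rwa [hP, withDensity_apply _ MeasurableSet.univ, setLIntegral_univ] at this
  have hQone : ∫⁻ ω, q ω ∂μ = 1 := by
    have := measure_univ (μ := Q)
    rwa [hQ, withDensity_apply _ MeasurableSet.univ, setLIntegral_univ] at this
  -- squares
  have hsqp : ∀ ω, (p ω ^ (1/2 : ℝ)) ^ (2 : ℝ) = p ω := by
    intro ω
    rw [← ENNReal.rpow_mul]
    norm_num
  have hsqq : ∀ ω, (q ω ^ (1/2 : ℝ)) ^ (2 : ℝ) = q ω := by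
    intro ω
    rw [← ENNReal.rpow_mul]
    norm_num
  have key1 : ∫⁻ ω, (q ω ^ (1/2 : ℝ) * ENNReal.ofReal |g ω|) * p ω ^ (1/2 : ℝ) ∂μ ≤
      (∫⁻ ω, ENNReal.ofReal ((f ω - b) ^ 2 / (b - c) ^ 2) ∂Q) ^ (1 / 2 : ℝ) := by
    have := ENNReal.lintegral_mul_le_Lp_mul_Lq μ h22 hq2.aemeasurable
      ((hp.pow_const (1/2 : ℝ)).aemeasurable)
    simp only [Pi.mul_apply] at this
    refine le_trans this ?_
    have e1 : ∫⁻ ω, (p ω ^ (1/2:ℝ)) ^ (2:ℝ) ∂μ = 1 := by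
      simp only [hsqp]; exact hPone
    have e2 : ∫⁻ ω, (q ω ^ (1/2:ℝ) * ENNReal.ofReal |g ω|) ^ (2:ℝ) ∂μ =
        ∫⁻ ω, ENNReal.ofReal ((f ω - b) ^ 2 / (b - c) ^ 2) ∂Q := by
      rw [hQ, lintegral_withDensity_eq_lintegral_mul μ hq
        (show Measurable fun ω => ENNReal.ofReal ((f ω - b) ^ 2 / (b - c) ^ 2) from
          (((hf.sub measurable_const).pow_const 2).div_const _).ennreal_ofReal)]
      congr 1
      funext ω
      rw [ENNReal.mul_rpow_of_nonneg _ _ (by norm_num : (0:ℝ) ≤ 2), hsqq]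
      simp only [Pi.mul_apply]
      congr 1
      rw [ENNReal.ofReal_rpow_of_nonneg (abs_nonneg _) (by norm_num : (0:ℝ) ≤ 2)]
      congr 1
      rw [show ((2:ℝ)) = ((2:ℕ):ℝ) by norm_num, Real.rpow_natCast, sq_abs]
      simp [hg_def, div_pow]
    rw [e1, e2, ENNReal.one_rpow, mul_one]
  have key2 : ∫⁻ ω, (p ω ^ (1/2 : ℝ) * ENNReal.ofReal |h ω|) * q ω ^ (1/2 : ℝ) ∂μ ≤
      (∫⁻ ω, ENNReal.ofReal ((f ω - c) ^ 2 / (b - c) ^ 2) ∂P) ^ (1 / 2 : ℝ) := by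
    have := ENNReal.lintegral_mul_le_Lp_mul_Lq μ h22 hp2.aemeasurable
      ((hq.pow_const (1/2 : ℝ)).aemeasurable)
    simp only [Pi.mul_apply] at this
    refine le_trans this ?_
    have e1 : ∫⁻ ω, (q ω ^ (1/2:ℝ)) ^ (2:ℝ) ∂μ = 1 := by
      simp only [hsqq]; exact hQone
    have e2 : ∫⁻ ω, (p ω ^ (1/2:ℝ) * ENNReal.ofReal |h ω|) ^ (2:ℝ) ∂μ =
        ∫⁻ ω, ENNReal.ofReal ((f ω - c) ^ 2 / (b - c) ^ 2) ∂P := by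
      rw [hP, lintegral_withDensity_eq_lintegral_mul μ hp
        (show Measurable fun ω => ENNReal.ofReal ((f ω - c) ^ 2 / (b - c) ^ 2) from
          (((hf.sub measurable_const).pow_const 2).div_const _).ennreal_ofReal)]
      congr 1
      funext ω
      rw [ENNReal.mul_rpow_of_nonneg _ _ (by norm_num : (0:ℝ) ≤ 2), hsqp]
      simp only [Pi.mul_apply]
      congr 1
      rw [ENNReal.ofReal_rpow_of_nonneg (abs_nonneg _) (by norm_num : (0:ℝ) ≤ 2)]
      congr 1
      rw [show ((2:ℝ)) = ((2:ℕ):ℝ) by norm_num, Real.rpow_natCast, sq_abs]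
      simp [hh_def, div_pow]
    rw [e1, e2, ENNReal.one_rpow, mul_one]
  calc ∫⁻ ω, (p ω * q ω) ^ (1 / 2 : ℝ) ∂μ
      ≤ ∫⁻ ω, ((q ω ^ (1/2 : ℝ) * ENNReal.ofReal |g ω|) * p ω ^ (1/2 : ℝ) +
          (p ω ^ (1/2 : ℝ) * ENNReal.ofReal |h ω|) * q ω ^ (1/2 : ℝ)) ∂μ :=
        lintegral_mono hpt
    _ = (∫⁻ ω, (q ω ^ (1/2 : ℝ) * ENNReal.ofReal |g ω|) * p ω ^ (1/2 : ℝ) ∂μ) +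
        (∫⁻ ω, (p ω ^ (1/2 : ℝ) * ENNReal.ofReal |h ω|) * q ω ^ (1/2 : ℝ) ∂μ) :=
        lintegral_add_left (hq2.mul (hp.pow_const _)) _
    _ ≤ _ := add_le_add key1 key2
end
end
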